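/- Let α be a fixed partition and n an even positive integer. Then Σ_{λ : λ ⊇ α, |λ/α| = n} (−1)^{v(λ)} I_{λ/α}² = Σ_{μ : μ ⊆ α, |α/μ| = n} (−1)^{v(μ)} I_{α/μ}². -/

import Mathlib

open scoped Classical
open Finset

/-- Cells of the skew shape `lam / μ`. -/
def cellsOf (μ lam : YoungDiagram) : Finset (ℕ × ℕ) := lam.cells \ μ.cells

/-- `f` is (the entry function of) a standard Young tableau of skew shape `lam / μ`,
with entries `1, …, n` and `f x = 0` off the shape. -/
def IsSkewSYT (μ lam : YoungDiagram) (f : ℕ × ℕ → ℕ) : Prop :=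
  (∀ x, x ∉ cellsOf μ lam → f x = 0) ∧
  Set.BijOn f (cellsOf μ lam) (Set.Icc 1 (cellsOf μ lam).card) ∧
  ∀ x ∈ cellsOf μ lam, ∀ y ∈ cellsOf μ lam,
    ((x.1 = y.1 ∧ x.2 < y.2) ∨ (x.2 = y.2 ∧ x.1 < y.1)) → f x < f y

/-- The sign of the row-reading word (book order) of a filling `f` of `lam / μ`:
`(-1)` to the number of inversions. -/
noncomputable def tabSign {β : Type*} [LinearOrder β] (μ lam : YoungDiagram)
    (f : ℕ × ℕ → β) : ℤ :=
  (-1) ^ (((cellsOf μ lam) ×ˢ (cellsOf μ lam)).filter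
    (fun p => (p.1.1 < p.2.1 ∨ (p.1.1 = p.2.1 ∧ p.1.2 < p.2.2)) ∧ f p.2 < f p.1)).card

/-- The sign-imbalance `I_{lam/μ}`. -/
noncomputable def imb (μ lam : YoungDiagram) : ℤ :=
  ∑ᶠ f ∈ {f : ℕ × ℕ → ℕ | IsSkewSYT μ lam f}, tabSign μ lam f

/-- `S` records the top cells of a set of pairwise disjoint vertical dominoes in `lam`. -/
def IsVDominoSet (lam : YoungDiagram) (S : Finset (ℕ × ℕ)) : Prop :=
  (∀ p ∈ S, p ∈ lam ∧ (p.1 + 1, p.2) ∈ lam) ∧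
  (S : Set (ℕ × ℕ)).PairwiseDisjoint
    (fun p => ({p, (p.1 + 1, p.2)} : Finset (ℕ × ℕ)))

/-- `v(lam)`: the maximal number of disjoint vertical dominoes fitting inside `lam`. -/
noncomputable def vDom (lam : YoungDiagram) : ℕ :=
  sSup {k | ∃ S : Finset (ℕ × ℕ), IsVDominoSet lam S ∧ S.card = k}


namespace SjoAux

/-- number of cells strictly below row `r` -/
def bel (μ : YoungDiagram) (r : ℕ) : ℕ := (μ.cells.filter (fun c => r < c.1)).card

/-- a cell can be added at the end of row `r` -/
def addIn (μ : YoungDiagram) (r : ℕ) : Prop := r = 0 ∨ μ.rowLen r < μ.rowLen (r - 1)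

/-- a cell can be removed at the end of row `r` -/
def remIn (μ : YoungDiagram) (r : ℕ) : Prop := μ.rowLen (r + 1) < μ.rowLen r

theorem lowerSet_insert {μ : YoungDiagram} {r : ℕ} (h : addIn μ r) :
    IsLowerSet (insert (r, μ.rowLen r) (μ.cells : Set (ℕ × ℕ))) := by
  rintro ⟨a, b⟩ ⟨i, j⟩ hle hab
  obtain ⟨hi, hj⟩ : i ≤ a ∧ j ≤ b := Prod.mk_le_mk.mp hle
  simp only [Set.mem_insert_iff, Finset.mem_coe, YoungDiagram.mem_cells, Prod.mk.injEq] at hab ⊢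
  rcases hab with ⟨rfl, rfl⟩ | hab
  · -- (a, b) = (r, rowLen r), goal about (i,j) with i ≤ r, j ≤ rowLen r
    rcases eq_or_lt_of_le hi with rfl | ha'
    · rcases eq_or_lt_of_le hj with rfl | hb'
      · left; exact ⟨rfl, rfl⟩
      · right; exact YoungDiagram.mem_iff_lt_rowLen.mpr hb'
    · right
      rcases h with rfl | h
      · omega
      · have h2 : μ.rowLen (a-1) ≤ μ.rowLen i := μ.rowLen_anti i (a-1) (by omega)
        exact YoungDiagram.mem_iff_lt_rowLen.mpr (by omega)
  · right; exact μ.isLowerSet hle hab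

theorem lowerSet_erase {μ : YoungDiagram} {r : ℕ} (h : remIn μ r) :
    IsLowerSet ((μ.cells.erase (r, μ.rowLen r - 1) : Finset (ℕ × ℕ)) : Set (ℕ × ℕ)) := by
  rintro ⟨a, b⟩ ⟨i, j⟩ hle hab
  obtain ⟨hai, hbj⟩ : i ≤ a ∧ j ≤ b := Prod.mk_le_mk.mp hle
  simp only [Finset.coe_erase, Set.mem_diff, Finset.mem_coe, YoungDiagram.mem_cells,
    Set.mem_singleton_iff, Prod.mk.injEq] at hab ⊢
  obtain ⟨hmem, hne⟩ := hab
  refine ⟨μ.isLowerSet hle hmem, ?_⟩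
  rintro ⟨rfl, rfl⟩
  -- now the old r is i, the old j is rowLen i - 1
  have hr1 : 1 ≤ μ.rowLen i := by unfold remIn at h; omega
  have hb : b < μ.rowLen a := YoungDiagram.mem_iff_lt_rowLen.mp hmem
  rcases eq_or_lt_of_le hai with rfl | hi'
  · apply hne; omega
  · have h3 : μ.rowLen a ≤ μ.rowLen (i+1) := μ.rowLen_anti (i+1) a (by omega)
    unfold remIn at h
    omega

/-- add a cell at the end of row `r` (junk value `μ` if not addable) -/
noncomputable def grow (μ : YoungDiagram) (r : ℕ) : YoungDiagram :=
  if h : addIn μ r then ⟨insert (r, μ.rowLen r) μ.cells, by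
    rw [Finset.coe_insert]; exact lowerSet_insert h⟩ else μ

/-- remove the cell at the end of row `r` (junk value `μ` if not removable) -/
noncomputable def shrink (μ : YoungDiagram) (r : ℕ) : YoungDiagram :=
  if h : remIn μ r then ⟨μ.cells.erase (r, μ.rowLen r - 1), lowerSet_erase h⟩ else μ

theorem cells_grow {μ : YoungDiagram} {r : ℕ} (h : addIn μ r) :
    (grow μ r).cells = insert (r, μ.rowLen r) μ.cells := by
  rw [grow, dif_pos h]

theorem cells_shrink {μ : YoungDiagram} {r : ℕ} (h : remIn μ r) :
    (shrink μ r).cells = μ.cells.erase (r, μ.rowLen r - 1) := by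
  rw [shrink, dif_pos h]

theorem corner_not_mem (μ : YoungDiagram) (r : ℕ) : (r, μ.rowLen r) ∉ μ := by
  rw [YoungDiagram.mem_iff_lt_rowLen]; omega

theorem corner_mem {μ : YoungDiagram} {r : ℕ} (h : remIn μ r) :
    (r, μ.rowLen r - 1) ∈ μ := by
  rw [YoungDiagram.mem_iff_lt_rowLen]; unfold remIn at h; omega

theorem card_grow {μ : YoungDiagram} {r : ℕ} (h : addIn μ r) :
    (grow μ r).card = μ.card + 1 := by
  show (grow μ r).cells.card = μ.cells.card + 1
  rw [cells_grow h, Finset.card_insert_of_notMem]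
  exact fun hc => corner_not_mem μ r (by simpa using hc)

theorem card_shrink {μ : YoungDiagram} {r : ℕ} (h : remIn μ r) :
    (shrink μ r).card + 1 = μ.card := by
  show (shrink μ r).cells.card + 1 = μ.cells.card
  rw [cells_shrink h, Finset.card_erase_of_mem (by simpa using corner_mem h)]
  have : 0 < μ.cells.card := Finset.card_pos.mpr ⟨_, by simpa using corner_mem h⟩
  omega

theorem rowLen_eq_of {μ : YoungDiagram} {i n : ℕ} (h1 : (i, n) ∉ μ)
    (h2 : ∀ j < n, (i, j) ∈ μ) : μ.rowLen i = n := by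
  rw [YoungDiagram.mem_iff_lt_rowLen] at h1
  rcases Nat.eq_zero_or_pos n with rfl | hn
  · omega
  · have := YoungDiagram.mem_iff_lt_rowLen.mp (h2 (n-1) (by omega))
    omega

theorem colLen_eq_of {μ : YoungDiagram} {j n : ℕ} (h1 : (n, j) ∉ μ)
    (h2 : ∀ i < n, (i, j) ∈ μ) : μ.colLen j = n := by
  rw [YoungDiagram.mem_iff_lt_colLen] at h1
  rcases Nat.eq_zero_or_pos n with rfl | hn
  · omega
  · have := YoungDiagram.mem_iff_lt_colLen.mp (h2 (n-1) (by omega))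
    omega

theorem mem_grow {μ : YoungDiagram} {r : ℕ} (h : addIn μ r) {x : ℕ × ℕ} :
    x ∈ grow μ r ↔ x = (r, μ.rowLen r) ∨ x ∈ μ := by
  show x ∈ (grow μ r).cells ↔ _
  rw [cells_grow h, Finset.mem_insert]; simp

theorem mem_shrink {μ : YoungDiagram} {r : ℕ} (h : remIn μ r) {x : ℕ × ℕ} :
    x ∈ shrink μ r ↔ x ∈ μ ∧ x ≠ (r, μ.rowLen r - 1) := by
  show x ∈ (shrink μ r).cells ↔ _
  rw [cells_shrink h, Finset.mem_erase]; simp; tauto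

theorem rowLen_grow {μ : YoungDiagram} {r : ℕ} (h : addIn μ r) (i : ℕ) :
    (grow μ r).rowLen i = μ.rowLen i + if i = r then 1 else 0 := by
  by_cases hir : i = r
  · rw [hir, if_pos rfl]
    apply rowLen_eq_of
    · rw [mem_grow h]
      rintro (hx | hx)
      · rw [Prod.mk.injEq] at hx; omega
      · rw [YoungDiagram.mem_iff_lt_rowLen] at hx; omega
    · intro j hj
      rw [mem_grow h]
      rcases Nat.lt_succ_iff_lt_or_eq.mp hj with hj' | rfl
      · right; exact YoungDiagram.mem_iff_lt_rowLen.mpr hj'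
      · left; rfl
  · rw [if_neg hir, add_zero]
    apply rowLen_eq_of
    · rw [mem_grow h]
      rintro (hx | hx)
      · rw [Prod.mk.injEq] at hx; exact hir hx.1
      · rw [YoungDiagram.mem_iff_lt_rowLen] at hx; omega
    · intro j hj
      rw [mem_grow h]
      right; exact YoungDiagram.mem_iff_lt_rowLen.mpr hj

theorem rowLen_shrink {μ : YoungDiagram} {r : ℕ} (h : remIn μ r) (i : ℕ) :
    (shrink μ r).rowLen i + (if i = r then 1 else 0) = μ.rowLen i := by
  have hr1 : 1 ≤ μ.rowLen r := by unfold remIn at h; omega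
  by_cases hir : i = r
  · rw [hir, if_pos rfl]
    suffices hs : (shrink μ r).rowLen r = μ.rowLen r - 1 by omega
    apply rowLen_eq_of
    · rw [mem_shrink h]
      rintro ⟨_, hne⟩
      exact hne rfl
    · intro j hj
      rw [mem_shrink h]
      refine ⟨YoungDiagram.mem_iff_lt_rowLen.mpr (by omega), ?_⟩
      rw [Ne, Prod.mk.injEq]
      omega
  · rw [if_neg hir, add_zero]
    apply rowLen_eq_of
    · rw [mem_shrink h]
      rintro ⟨hmem, _⟩
      rw [YoungDiagram.mem_iff_lt_rowLen] at hmem; omega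
    · intro j hj
      rw [mem_shrink h]
      refine ⟨YoungDiagram.mem_iff_lt_rowLen.mpr hj, ?_⟩
      rw [Ne, Prod.mk.injEq]
      tauto

theorem remIn_grow_self {μ : YoungDiagram} {r : ℕ} (h : addIn μ r) :
    remIn (grow μ r) r := by
  unfold remIn
  rw [rowLen_grow h, rowLen_grow h, if_pos rfl, if_neg (by omega)]
  have := μ.rowLen_anti r (r+1) (by omega)
  omega

theorem addIn_shrink_self {μ : YoungDiagram} {r : ℕ} (h : remIn μ r) :
    addIn (shrink μ r) r := by
  unfold addIn
  rcases Nat.eq_zero_or_pos r with rfl | hr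
  · left; rfl
  · right
    have h1 := rowLen_shrink h r
    have h2 := rowLen_shrink h (r-1)
    rw [if_pos rfl] at h1
    rw [if_neg (by omega)] at h2
    have := μ.rowLen_anti (r-1) r (by omega)
    unfold remIn at h
    omega

theorem grow_shrink {μ : YoungDiagram} {r : ℕ} (h : addIn μ r) :
    shrink (grow μ r) r = μ := by
  have hrem := remIn_grow_self h
  apply YoungDiagram.ext
  rw [cells_shrink hrem, cells_grow h]
  have : (grow μ r).rowLen r - 1 = μ.rowLen r := by
    rw [rowLen_grow h, if_pos rfl]
    omega
  rw [this]
  exact Finset.erase_insert (by simpa using corner_not_mem μ r)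

theorem shrink_grow {μ : YoungDiagram} {r : ℕ} (h : remIn μ r) :
    grow (shrink μ r) r = μ := by
  have hadd := addIn_shrink_self h
  apply YoungDiagram.ext
  rw [cells_grow hadd, cells_shrink h]
  have h1 := rowLen_shrink h r
  rw [if_pos rfl] at h1
  have : (shrink μ r).rowLen r = μ.rowLen r - 1 := by omega
  rw [this]
  exact Finset.insert_erase (by simpa using corner_mem h)

theorem growEq_iff {ν τ : YoungDiagram} {r : ℕ} :
    (addIn ν r ∧ grow ν r = τ) ↔ (remIn τ r ∧ shrink τ r = ν) := by
  constructor
  · rintro ⟨h, rfl⟩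
    exact ⟨remIn_grow_self h, grow_shrink h⟩
  · rintro ⟨h, rfl⟩
    exact ⟨addIn_shrink_self h, shrink_grow h⟩

theorem rowLen_le_card (μ : YoungDiagram) (i : ℕ) : μ.rowLen i ≤ μ.card := by
  rw [YoungDiagram.rowLen_eq_card]
  apply Finset.card_le_card
  intro x hx
  exact (YoungDiagram.mem_row_iff.mp hx).1

theorem colLen_le_card (μ : YoungDiagram) (j : ℕ) : μ.colLen j ≤ μ.card := by
  rw [YoungDiagram.colLen_eq_card]
  apply Finset.card_le_card
  intro x hx
  exact (YoungDiagram.mem_col_iff.mp hx).1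

theorem addIn_bound {μ : YoungDiagram} {r : ℕ} (h : addIn μ r) : r ≤ μ.card := by
  rcases h with rfl | h
  · omega
  · have h0 : 0 < μ.rowLen (r-1) := by omega
    have : r - 1 < μ.colLen 0 := by
      rw [← YoungDiagram.mem_iff_lt_colLen]
      rw [YoungDiagram.mem_iff_lt_rowLen]; exact h0
    have := colLen_le_card μ 0
    rcases Nat.eq_zero_or_pos r with rfl | hr <;> omega

theorem remIn_bound {μ : YoungDiagram} {r : ℕ} (h : remIn μ r) : r < μ.card := by
  have h0 : 0 < μ.rowLen r := by unfold remIn at h; omega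
  have : r < μ.colLen 0 := by
    rw [← YoungDiagram.mem_iff_lt_colLen, YoungDiagram.mem_iff_lt_rowLen]; exact h0
  have := colLen_le_card μ 0
  omega

theorem bel_grow {μ : YoungDiagram} {r : ℕ} (h : addIn μ r) (s : ℕ) :
    bel (grow μ r) s = bel μ s + if s < r then 1 else 0 := by
  unfold bel
  rw [cells_grow h, Finset.filter_insert]
  by_cases hs : s < r
  · rw [if_pos hs, if_pos hs, Finset.card_insert_of_notMem (fun hc => corner_not_mem μ r
      (by simpa using (Finset.mem_filter.mp hc).1))]
  · rw [if_neg hs, if_neg hs, add_zero]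

theorem bel_shrink {μ : YoungDiagram} {r : ℕ} (h : remIn μ r) (s : ℕ) :
    bel (shrink μ r) s + (if s < r then 1 else 0) = bel μ s := by
  have := bel_grow (addIn_shrink_self h) s
  rw [shrink_grow h] at this
  omega

theorem bel_shrink_self {μ : YoungDiagram} {r : ℕ} (h : remIn μ r) :
    bel (shrink μ r) r = bel μ r := by
  have := bel_shrink h r
  rw [if_neg (by omega)] at this
  omega

theorem bel_grow_self {μ : YoungDiagram} {r : ℕ} (h : addIn μ r) :
    bel (grow μ r) r = bel μ r := by
  rw [bel_grow h, if_neg (by omega), add_zero]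

theorem shrink_le {μ : YoungDiagram} {r : ℕ} : shrink μ r ≤ μ := by
  unfold shrink
  split
  · intro x hx
    exact Finset.mem_of_mem_erase hx
  · exact le_refl μ

theorem le_grow {μ : YoungDiagram} {r : ℕ} : μ ≤ grow μ r := by
  unfold grow
  split
  · intro x hx
    exact Finset.mem_insert_of_mem hx
  · exact le_refl μ

theorem addIn_succ_iff {μ : YoungDiagram} {r : ℕ} : addIn μ (r+1) ↔ remIn μ r := by
  unfold addIn remIn
  simp

theorem addIn_zero (μ : YoungDiagram) : addIn μ 0 := Or.inl rfl

/-- Lemma C : the alternating sum over addable and removable rows is 1. -/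
theorem cornerAlt (μ : YoungDiagram) {M : ℕ} (hM : μ.card < M) :
    ((Finset.range M).sum (fun r => if addIn μ r then ((-1 : ℤ)) ^ r else 0)
    + (Finset.range M).sum (fun r => if remIn μ r then ((-1 : ℤ)) ^ r else 0)) = 1 := by
  obtain ⟨M', rfl⟩ : ∃ M', M = M' + 1 := ⟨M - 1, by omega⟩
  rw [Finset.sum_range_succ' (fun r => if addIn μ r then ((-1 : ℤ)) ^ r else 0),
    Finset.sum_range_succ (fun r => if remIn μ r then ((-1 : ℤ)) ^ r else 0)]
  rw [if_pos (addIn_zero μ)]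
  have hlast : ¬ remIn μ M' := fun hc => by have := remIn_bound hc; omega
  rw [if_neg hlast, add_zero, pow_zero]
  have : ∀ r, (if addIn μ (r+1) then ((-1 : ℤ)) ^ (r+1) else 0)
      = - (if remIn μ r then ((-1 : ℤ)) ^ r else 0) := by
    intro r
    rw [show ((-1 : ℤ)) ^ (r+1) = -((-1)^r) by ring]
    by_cases h : remIn μ r
    · rw [if_pos (addIn_succ_iff.mpr h), if_pos h]
    · rw [if_neg (fun hc => h (addIn_succ_iff.mp hc)), if_neg h, neg_zero]
  rw [Finset.sum_congr rfl (fun r _ => this r), Finset.sum_neg_distrib]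
  ring

/-- off-diagonal condition swap -/
theorem offdiag_cond {σ : YoungDiagram} {r s : ℕ} (hrs : r ≠ s) :
    (addIn σ r ∧ remIn (grow σ r) s) ↔ (remIn σ s ∧ addIn (shrink σ s) r) := by
  constructor
  · rintro ⟨ha, hb⟩
    have hg := rowLen_grow ha
    unfold remIn at hb
    rw [hg, hg, if_neg (Ne.symm hrs)] at hb
    by_cases hc : s + 1 = r
    · rw [if_pos hc, add_zero] at hb
      -- L s > L r + 1, r = s+1
      have hrem : remIn σ s := by
        unfold remIn
        have := σ.rowLen_anti (s+1) r (by omega)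
        omega
      refine ⟨hrem, ?_⟩
      unfold addIn
      right
      rw [show r - 1 = s from by omega]
      rw [hc] at hb
      have h1 := rowLen_shrink hrem r
      have h2 := rowLen_shrink hrem s
      rw [if_neg hrs] at h1
      rw [if_pos rfl] at h2
      omega
    · rw [if_neg hc, add_zero, add_zero] at hb
      refine ⟨hb, ?_⟩
      have h1 := rowLen_shrink hb r
      rw [if_neg hrs] at h1
      rcases ha with rfl | ha
      · exact addIn_zero _
      · right
        have h2 := rowLen_shrink hb (r-1)
        rw [if_neg (by omega)] at h2
        omega
  · rintro ⟨hc, hd⟩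
    have h1 := rowLen_shrink hc r
    rw [if_neg hrs] at h1
    have hadd : addIn σ r := by
      rcases hd with rfl | hd
      · exact addIn_zero _
      · right
        have h2 := rowLen_shrink hc (r-1)
        by_cases he : r - 1 = s
        · rw [if_pos he] at h2
          have := σ.rowLen_anti s (r-1) (le_of_eq he.symm)
          omega
        · rw [if_neg he] at h2
          omega
    refine ⟨hadd, ?_⟩
    unfold remIn
    have hg := rowLen_grow hadd
    rw [hg, hg, if_neg (Ne.symm hrs)]
    by_cases hc' : s + 1 = r
    · rw [if_pos hc', add_zero, hc']
      have h2 := rowLen_shrink hc (r-1)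
      rw [if_pos (by omega)] at h2
      rw [show r - 1 = s from by omega] at h2
      rcases hd with rfl | hd
      · omega
      · rw [show r - 1 = s from by omega] at hd
        omega
    · rw [if_neg hc', add_zero, add_zero]
      exact hc

/-- off-diagonal shape swap -/
theorem offdiag_shape {σ : YoungDiagram} {r s : ℕ} (hrs : r ≠ s)
    (ha : addIn σ r) (hb : remIn (grow σ r) s) :
    shrink (grow σ r) s = grow (shrink σ s) r := by
  obtain ⟨hc, hd⟩ := (offdiag_cond hrs).mp ⟨ha, hb⟩
  apply YoungDiagram.ext
  rw [cells_shrink hb, cells_grow ha, cells_grow hd, cells_shrink hc]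
  have e1 : (grow σ r).rowLen s = σ.rowLen s := by
    rw [rowLen_grow ha, if_neg (Ne.symm hrs), add_zero]
  have e2 : (shrink σ s).rowLen r = σ.rowLen r := by
    have := rowLen_shrink hc r
    rw [if_neg hrs] at this
    omega
  rw [e1, e2]
  apply Finset.erase_insert_of_ne
  rw [Ne, Prod.mk.injEq]
  rintro ⟨rfl, -⟩
  exact hrs rfl

/-! ### vDom formula -/

theorem count_lemma {N h : ℕ} (hN : h ≤ N) :
    ((Finset.range N).filter (fun i => i % 2 = 0 ∧ i + 1 < h)).card = h / 2 := by
  have himg : (Finset.range N).filter (fun i => i % 2 = 0 ∧ i + 1 < h)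
      = (Finset.range (h / 2)).image (fun m => 2 * m) := by
    ext a
    simp only [Finset.mem_image, Finset.mem_filter, Finset.mem_range]
    constructor
    · rintro ⟨ha, he, hlt⟩
      exact ⟨a / 2, by omega, by omega⟩
    · rintro ⟨m, hm, rfl⟩
      omega
  rw [himg, Finset.card_image_of_injective _ (fun a b hab => by omega), Finset.card_range]

/-- column sums formula for the maximal number of vertical dominoes -/
def colS (lam : YoungDiagram) : ℕ := (Finset.range lam.card).sum (fun j => lam.colLen j / 2)

theorem vdom_set_bound {lam : YoungDiagram} {S : Finset (ℕ × ℕ)}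
    (h : IsVDominoSet lam S) : S.card ≤ colS lam := by
  have hcol : ∀ p ∈ S, p.2 ∈ Finset.range lam.card := by
    intro p hp
    rw [Finset.mem_range]
    have hmem := (h.1 p hp).1
    have h1 : p.2 < lam.rowLen p.1 := by
      have := YoungDiagram.mem_iff_lt_rowLen.mp (show (p.1, p.2) ∈ lam from hmem)
      omega
    have := rowLen_le_card lam p.1
    omega
  rw [Finset.card_eq_sum_card_fiberwise hcol]
  apply Finset.sum_le_sum
  intro j _
  have hmaps : ∀ p ∈ S.filter (fun p => p.2 = j), p.1 / 2 ∈ Finset.range (lam.colLen j / 2) := by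
    intro p hp
    obtain ⟨hpS, hpj⟩ := Finset.mem_filter.mp hp
    have hmem := (h.1 p hpS).2
    have h1 : p.1 + 1 < lam.colLen p.2 := YoungDiagram.mem_iff_lt_colLen.mp hmem
    rw [hpj] at h1
    rw [Finset.mem_range]
    omega
  have hinj : Set.InjOn (fun p : ℕ × ℕ => p.1 / 2) (S.filter (fun p => p.2 = j)) := by
    intro p hp q hq heq
    simp only [Finset.coe_filter, Set.mem_setOf_eq] at hp hq
    obtain ⟨hpS, hpj⟩ := hp
    obtain ⟨hqS, hqj⟩ := hq
    by_contra hne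
    have hd := h.2 (Finset.mem_coe.mpr hpS) (Finset.mem_coe.mpr hqS) hne
    have hd2 := Finset.disjoint_left.mp hd
    have e1 : p.1 ≠ q.1 := by
      intro hc
      exact hne (Prod.ext hc (by rw [hpj, hqj]))
    have e2 : p.1 ≠ q.1 + 1 := by
      intro hc
      exact hd2 (Finset.mem_insert_self _ _)
        (by rw [show p = (q.1+1, q.2) from Prod.ext hc (by rw [hpj, hqj])]
            exact Finset.mem_insert_of_mem (Finset.mem_singleton_self _))
    have e3 : p.1 + 1 ≠ q.1 := by
      intro hc
      exact hd2 (Finset.mem_insert_of_mem (Finset.mem_singleton_self _))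
        (by rw [show (p.1+1, p.2) = q from Prod.ext hc (by rw [hpj, hqj])]
            exact Finset.mem_insert_self _ _)
    simp only at heq
    omega
  calc (S.filter (fun p => p.2 = j)).card
      ≤ (Finset.range (lam.colLen j / 2)).card :=
        Finset.card_le_card_of_injOn _ hmaps hinj
    _ = lam.colLen j / 2 := Finset.card_range _

/-- the witness set of dominoes -/
def S0 (lam : YoungDiagram) : Finset (ℕ × ℕ) :=
  (Finset.range lam.card ×ˢ Finset.range lam.card).filter
    (fun p => p.1 % 2 = 0 ∧ p.1 + 1 < lam.colLen p.2)

theorem mem_S0 {lam : YoungDiagram} {p : ℕ × ℕ} :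
    p ∈ S0 lam ↔ (p.1 < lam.card ∧ p.2 < lam.card ∧ p.1 % 2 = 0 ∧ p.1 + 1 < lam.colLen p.2) := by
  unfold S0
  simp only [Finset.mem_filter, Finset.mem_product, Finset.mem_range]
  tauto

theorem S0_spec (lam : YoungDiagram) : IsVDominoSet lam (S0 lam) := by
  constructor
  · intro p hp
    rw [mem_S0] at hp
    constructor
    · exact YoungDiagram.mem_iff_lt_colLen.mpr (by omega)
    · exact YoungDiagram.mem_iff_lt_colLen.mpr (by omega)
  · intro p hp q hq hne
    rw [Finset.mem_coe, mem_S0] at hp hq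
    rw [Function.onFun, Finset.disjoint_left]
    intro a ha hb
    simp only [Finset.mem_insert, Finset.mem_singleton] at ha hb
    have hpq : p ≠ q := hne
    rcases ha with rfl | rfl
    · rcases hb with hb | hb
      · exact hpq hb
      · rw [Prod.ext_iff] at hb
        simp only at hb
        -- p.1 = q.1 + 1, parity contradiction
        omega
    · rcases hb with hb | hb
      · rw [Prod.ext_iff] at hb
        simp only at hb
        omega
      · rw [Prod.ext_iff] at hb
        simp only at hb
        have : p ≠ q := hne
        apply this
        apply Prod.ext <;> omega

theorem card_S0 (lam : YoungDiagram) : (S0 lam).card = colS lam := by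
  have hcol : ∀ p ∈ S0 lam, p.2 ∈ Finset.range lam.card := by
    intro p hp
    rw [mem_S0] at hp
    rw [Finset.mem_range]
    omega
  rw [Finset.card_eq_sum_card_fiberwise hcol]
  apply Finset.sum_congr rfl
  intro j hj
  rw [Finset.mem_range] at hj
  have himg : (S0 lam).filter (fun p => p.2 = j)
      = ((Finset.range lam.card).filter (fun i => i % 2 = 0 ∧ i + 1 < lam.colLen j)).image
        (fun i => (i, j)) := by
    ext ⟨a, b⟩
    simp only [Finset.mem_filter, Finset.mem_image, Finset.mem_range, mem_S0, Prod.mk.injEq]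
    constructor
    · rintro ⟨⟨h1, h2, h3, h4⟩, rfl⟩
      exact ⟨a, ⟨h1, h3, h4⟩, rfl, rfl⟩
    · rintro ⟨i, ⟨h1, h3, h4⟩, rfl, rfl⟩
      exact ⟨⟨h1, hj, h3, h4⟩, rfl⟩
  rw [himg, Finset.card_image_of_injective _
    (fun a b hab => (Prod.ext_iff.mp hab).1)]
  exact count_lemma (colLen_le_card lam j)

theorem vDom_eq (lam : YoungDiagram) : vDom lam = colS lam := by
  have hempty : IsVDominoSet lam (∅ : Finset (ℕ × ℕ)) := by
    constructor
    · intro p hp; exact absurd hp (Finset.notMem_empty p)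
    · intro p hp; simp at hp
  have hne : {k | ∃ S : Finset (ℕ × ℕ), IsVDominoSet lam S ∧ S.card = k}.Nonempty :=
    ⟨0, ∅, hempty, Finset.card_empty⟩
  have hbdd : ∀ k ∈ {k | ∃ S : Finset (ℕ × ℕ), IsVDominoSet lam S ∧ S.card = k}, k ≤ colS lam := by
    rintro k ⟨S, hS, rfl⟩
    exact vdom_set_bound hS
  apply le_antisymm
  · exact csSup_le hne hbdd
  · exact le_csSup ⟨colS lam, hbdd⟩ ⟨S0 lam, S0_spec lam, card_S0 lam⟩

theorem colLen_rowLen {ν : YoungDiagram} {r : ℕ} (h : addIn ν r) :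
    ν.colLen (ν.rowLen r) = r := by
  apply colLen_eq_of
  · exact corner_not_mem ν r
  · intro i hi
    rcases h with rfl | h
    · omega
    · have := ν.rowLen_anti i (r-1) (by omega)
      exact YoungDiagram.mem_iff_lt_rowLen.mpr (by omega)

theorem colLen_grow_c0 {ν : YoungDiagram} {r : ℕ} (h : addIn ν r) :
    (grow ν r).colLen (ν.rowLen r) = r + 1 := by
  apply colLen_eq_of
  · rw [mem_grow h]
    rintro (hx | hx)
    · rw [Prod.mk.injEq] at hx; omega
    · rw [YoungDiagram.mem_iff_lt_colLen, colLen_rowLen h] at hx; omega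
  · intro i hi
    rw [mem_grow h]
    rcases Nat.lt_succ_iff_lt_or_eq.mp hi with hi' | rfl
    · right; rw [YoungDiagram.mem_iff_lt_colLen, colLen_rowLen h]; omega
    · left; rfl

theorem colLen_grow_ne {ν : YoungDiagram} {r j : ℕ} (h : addIn ν r) (hj : j ≠ ν.rowLen r) :
    (grow ν r).colLen j = ν.colLen j := by
  apply colLen_eq_of
  · rw [mem_grow h]
    rintro (hx | hx)
    · rw [Prod.mk.injEq] at hx; exact hj hx.2
    · rw [YoungDiagram.mem_iff_lt_colLen] at hx; omega
  · intro i hi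
    rw [mem_grow h]
    right; exact YoungDiagram.mem_iff_lt_colLen.mpr hi

theorem colLen_card_self (ν : YoungDiagram) : ν.colLen ν.card = 0 := by
  by_contra hc
  have h0 : (0, ν.card) ∈ ν := YoungDiagram.mem_iff_lt_colLen.mpr (by omega)
  have := YoungDiagram.mem_iff_lt_rowLen.mp h0
  have := rowLen_le_card ν 0
  omega

theorem vDom_grow {ν : YoungDiagram} {r : ℕ} (h : addIn ν r) :
    vDom (grow ν r) = vDom ν + r % 2 := by
  rw [vDom_eq, vDom_eq]
  unfold colS
  rw [card_grow h]
  set c0 := ν.rowLen r with hc0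
  have hc0lt : c0 < ν.card + 1 := by
    have := rowLen_le_card ν r
    omega
  have hcongr : ∀ j ∈ Finset.range (ν.card + 1),
      (grow ν r).colLen j / 2 = ν.colLen j / 2 + (if j = c0 then r % 2 else 0) := by
    intro j _
    by_cases hj : j = c0
    · subst hj
      rw [if_pos rfl, hc0, colLen_grow_c0 h, colLen_rowLen h]
      omega
    · rw [if_neg hj, colLen_grow_ne h hj, add_zero]
  rw [Finset.sum_congr rfl hcongr, Finset.sum_add_distrib, Finset.sum_ite_eq' _ c0,
    if_pos (Finset.mem_range.mpr hc0lt), Finset.sum_range_succ, colLen_card_self,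
    Nat.zero_div, add_zero]

/-! ### signed up and down operators -/

theorem sum_extendZ {β : Type*} [AddCommMonoid β] {N M : ℕ} (h : N ≤ M) (f : ℕ → β)
    (hf : ∀ r, N ≤ r → f r = 0) : (Finset.range M).sum f = (Finset.range N).sum f :=
  (Finset.sum_subset (Finset.range_subset_range.mpr h)
    (fun x hx hnx => hf x (by simp only [Finset.mem_range] at hx hnx; omega))).symm

noncomputable section

abbrev V : Type := YoungDiagram →₀ ℤ

def uvec (ν : YoungDiagram) : V :=
  (Finset.range (ν.card + 1)).sum (fun r =>
    if addIn ν r then Finsupp.single (grow ν r) ((-1 : ℤ) ^ (bel ν r)) else 0)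

def dvec (τ : YoungDiagram) : V :=
  (Finset.range (τ.card + 1)).sum (fun r =>
    if remIn τ r then Finsupp.single (shrink τ r) ((-1 : ℤ) ^ (r + bel τ r)) else 0)

def Uop : V →ₗ[ℤ] V := Finsupp.lsum ℤ (fun ν => LinearMap.toSpanSingleton ℤ V (uvec ν))
def Dop : V →ₗ[ℤ] V := Finsupp.lsum ℤ (fun τ => LinearMap.toSpanSingleton ℤ V (dvec τ))

theorem Uop_single (ν : YoungDiagram) (c : ℤ) : Uop (Finsupp.single ν c) = c • uvec ν := by
  rw [Uop, Finsupp.lsum_single, LinearMap.toSpanSingleton_apply]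

theorem Dop_single (τ : YoungDiagram) (c : ℤ) : Dop (Finsupp.single τ c) = c • dvec τ := by
  rw [Dop, Finsupp.lsum_single, LinearMap.toSpanSingleton_apply]

theorem uvec_apply (ν σ : YoungDiagram) : uvec ν σ =
    (Finset.range (ν.card + 1)).sum (fun r =>
      if addIn ν r ∧ grow ν r = σ then (-1 : ℤ) ^ (bel ν r) else 0) := by
  rw [uvec, Finsupp.finset_sum_apply]
  apply Finset.sum_congr rfl
  intro r _
  by_cases h : addIn ν r
  · rw [if_pos h, Finsupp.single_apply]
    by_cases h2 : grow ν r = σ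
    · rw [if_pos h2, if_pos ⟨h, h2⟩]
    · rw [if_neg h2, if_neg (by tauto)]
  · rw [if_neg h, if_neg (by tauto)]
    rfl

theorem dvec_apply (τ σ : YoungDiagram) : dvec τ σ =
    (Finset.range (τ.card + 1)).sum (fun r =>
      if remIn τ r ∧ shrink τ r = σ then (-1 : ℤ) ^ (r + bel τ r) else 0) := by
  rw [dvec, Finsupp.finset_sum_apply]
  apply Finset.sum_congr rfl
  intro r _
  by_cases h : remIn τ r
  · rw [if_pos h, Finsupp.single_apply]
    by_cases h2 : shrink τ r = σ
    · rw [if_pos h2, if_pos ⟨h, h2⟩]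
    · rw [if_neg h2, if_neg (by tauto)]
  · rw [if_neg h, if_neg (by tauto)]
    rfl

theorem uvec_apply' (ν σ : YoungDiagram) : uvec ν σ =
    (Finset.range (σ.card + 1)).sum (fun r =>
      if remIn σ r ∧ shrink σ r = ν then (-1 : ℤ) ^ (bel σ r) else 0) := by
  rw [uvec_apply]
  have hM1 : ν.card + 1 ≤ ν.card + σ.card + 2 := by omega
  have hM2 : σ.card + 1 ≤ ν.card + σ.card + 2 := by omega
  rw [← sum_extendZ hM1 _ (fun r hr => by
    rw [if_neg]; rintro ⟨h1, -⟩; have := addIn_bound h1; omega)]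
  rw [← sum_extendZ hM2 _ (fun r hr => by
    rw [if_neg]; rintro ⟨h1, -⟩; have := remIn_bound h1; omega)]
  apply Finset.sum_congr rfl
  intro r _
  by_cases h : addIn ν r ∧ grow ν r = σ
  · rw [if_pos h, if_pos (growEq_iff.mp h)]
    obtain ⟨h1, rfl⟩ := h
    rw [bel_grow_self h1]
  · rw [if_neg h, if_neg (fun hc => h (growEq_iff.mpr hc))]

theorem dvec_apply' (τ σ : YoungDiagram) : dvec τ σ =
    (Finset.range (σ.card + 1)).sum (fun r =>
      if addIn σ r ∧ grow σ r = τ then (-1 : ℤ) ^ (r + bel σ r) else 0) := by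
  rw [dvec_apply]
  have hM1 : τ.card + 1 ≤ τ.card + σ.card + 2 := by omega
  have hM2 : σ.card + 1 ≤ τ.card + σ.card + 2 := by omega
  rw [← sum_extendZ hM1 _ (fun r hr => by
    rw [if_neg]; rintro ⟨h1, -⟩; have := remIn_bound h1; omega)]
  rw [← sum_extendZ hM2 _ (fun r hr => by
    rw [if_neg]; rintro ⟨h1, -⟩; have := addIn_bound h1; omega)]
  apply Finset.sum_congr rfl
  intro r _
  by_cases h : remIn τ r ∧ shrink τ r = σ
  · rw [if_pos h, if_pos (growEq_iff.mpr h)]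
    obtain ⟨h1, rfl⟩ := h
    rw [bel_shrink_self h1]
  · rw [if_neg h, if_neg (fun hc => h (growEq_iff.mp hc))]

theorem U_apply (h : V) (σ : YoungDiagram) : (Uop h) σ =
    (Finset.range (σ.card + 1)).sum (fun r =>
      if remIn σ r then (-1 : ℤ) ^ (bel σ r) * h (shrink σ r) else 0) := by
  have h1 : Uop h = h.sum (fun ν c => c • uvec ν) := by
    rw [Uop, Finsupp.lsum_apply]
    apply Finsupp.sum_congr
    intro ν _
    rw [LinearMap.toSpanSingleton_apply]
  rw [h1, Finsupp.sum_apply, Finsupp.sum]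
  have h2 : ∀ ν ∈ h.support, (h ν • uvec ν) σ
      = (Finset.range (σ.card + 1)).sum (fun r =>
          if remIn σ r ∧ shrink σ r = ν then (-1 : ℤ) ^ (bel σ r) * h ν else 0) := by
    intro ν _
    rw [Finsupp.smul_apply, uvec_apply', smul_eq_mul, Finset.mul_sum]
    apply Finset.sum_congr rfl
    intro r _
    by_cases hc : remIn σ r ∧ shrink σ r = ν
    · rw [if_pos hc, if_pos hc]; ring
    · rw [if_neg hc, if_neg hc, mul_zero]
  rw [Finset.sum_congr rfl h2, Finset.sum_comm]
  apply Finset.sum_congr rfl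
  intro r _
  by_cases hP : remIn σ r
  · simp only [hP, true_and, if_true]
    rw [Finset.sum_ite_eq h.support (shrink σ r) (fun ν => (-1 : ℤ) ^ (bel σ r) * h ν)]
    by_cases hs : shrink σ r ∈ h.support
    · rw [if_pos hs]
    · rw [if_neg hs, Finsupp.notMem_support_iff.mp hs, mul_zero]
  · simp only [hP, false_and, if_false]
    exact Finset.sum_const_zero

theorem D_apply (h : V) (σ : YoungDiagram) : (Dop h) σ =
    (Finset.range (σ.card + 1)).sum (fun r =>
      if addIn σ r then (-1 : ℤ) ^ (r + bel σ r) * h (grow σ r) else 0) := by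
  have h1 : Dop h = h.sum (fun τ c => c • dvec τ) := by
    rw [Dop, Finsupp.lsum_apply]
    apply Finsupp.sum_congr
    intro τ _
    rw [LinearMap.toSpanSingleton_apply]
  rw [h1, Finsupp.sum_apply, Finsupp.sum]
  have h2 : ∀ τ ∈ h.support, (h τ • dvec τ) σ
      = (Finset.range (σ.card + 1)).sum (fun r =>
          if addIn σ r ∧ grow σ r = τ then (-1 : ℤ) ^ (r + bel σ r) * h τ else 0) := by
    intro τ _
    rw [Finsupp.smul_apply, dvec_apply', smul_eq_mul, Finset.mul_sum]
    apply Finset.sum_congr rfl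
    intro r _
    by_cases hc : addIn σ r ∧ grow σ r = τ
    · rw [if_pos hc, if_pos hc]; ring
    · rw [if_neg hc, if_neg hc, mul_zero]
  rw [Finset.sum_congr rfl h2, Finset.sum_comm]
  apply Finset.sum_congr rfl
  intro r _
  by_cases hP : addIn σ r
  · simp only [hP, true_and, if_true]
    rw [Finset.sum_ite_eq h.support (grow σ r) (fun τ => (-1 : ℤ) ^ (r + bel σ r) * h τ)]
    by_cases hs : grow σ r ∈ h.support
    · rw [if_pos hs]
    · rw [if_neg hs, Finsupp.notMem_support_iff.mp hs, mul_zero]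
  · simp only [hP, false_and, if_false]
    exact Finset.sum_const_zero

theorem neg_one_pow_mod (a : ℕ) : ((-1 : ℤ)) ^ a = (-1) ^ (a % 2) := by
  conv_lhs => rw [← Nat.div_add_mod a 2]
  rw [pow_add, pow_mul]
  norm_num

theorem neg_one_pow_congr {a b : ℕ} (h : a % 2 = b % 2) : ((-1 : ℤ)) ^ a = (-1) ^ b := by
  rw [neg_one_pow_mod a, neg_one_pow_mod b, h]

theorem neg_one_pow_twice (r b : ℕ) : ((-1 : ℤ)) ^ (r + b + b) = (-1) ^ r :=
  neg_one_pow_congr (by omega)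

/-- first composite kernel -/
def Fq (h : V) (σ : YoungDiagram) (r s : ℕ) : ℤ :=
  if addIn σ r ∧ remIn (grow σ r) s then
    (-1 : ℤ) ^ (r + bel σ r + bel (grow σ r) s) * h (shrink (grow σ r) s) else 0

/-- second composite kernel -/
def Gq (h : V) (σ : YoungDiagram) (r s : ℕ) : ℤ :=
  if remIn σ s ∧ addIn (shrink σ s) r then
    (-1 : ℤ) ^ (r + bel σ s + bel (shrink σ s) r) * h (grow (shrink σ s) r) else 0

theorem hDU (h : V) (σ : YoungDiagram) : Dop (Uop h) σ =
    ∑ r ∈ Finset.range (σ.card + 2), ∑ s ∈ Finset.range (σ.card + 2), Fq h σ r s := by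
  rw [D_apply]
  rw [← sum_extendZ (show σ.card + 1 ≤ σ.card + 2 by omega) _ (fun r hr => by
    rw [if_neg]; intro h1; have := addIn_bound h1; omega)]
  apply Finset.sum_congr rfl
  intro r _
  by_cases ha : addIn σ r
  · rw [if_pos ha, U_apply, card_grow ha, Finset.mul_sum]
    apply Finset.sum_congr rfl
    intro s _
    by_cases hb : remIn (grow σ r) s
    · rw [if_pos hb, Fq, if_pos ⟨ha, hb⟩, pow_add]
      ring
    · rw [if_neg hb, mul_zero, Fq, if_neg (by tauto)]
  · rw [if_neg ha]
    symm
    apply Finset.sum_eq_zero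
    intro s _
    rw [Fq, if_neg (by tauto)]

theorem hUD (h : V) (σ : YoungDiagram) : Uop (Dop h) σ =
    ∑ s ∈ Finset.range (σ.card + 2), ∑ r ∈ Finset.range (σ.card + 2), Gq h σ r s := by
  rw [U_apply]
  rw [← sum_extendZ (show σ.card + 1 ≤ σ.card + 2 by omega) _ (fun s hs => by
    rw [if_neg]; intro h1; have := remIn_bound h1; omega)]
  apply Finset.sum_congr rfl
  intro s _
  by_cases hc : remIn σ s
  · rw [if_pos hc, D_apply]
    have hcards : (shrink σ s).card + 1 ≤ σ.card + 2 := by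
      have := card_shrink hc
      omega
    rw [← sum_extendZ hcards _ (fun r hr => by
      rw [if_neg]; intro h1; have := addIn_bound h1; omega), Finset.mul_sum]
    apply Finset.sum_congr rfl
    intro r _
    by_cases hd : addIn (shrink σ s) r
    · rw [if_pos hd, Gq, if_pos ⟨hc, hd⟩, pow_add, pow_add]
      ring
    · rw [if_neg hd, mul_zero, Gq, if_neg (by tauto)]
  · rw [if_neg hc]
    symm
    apply Finset.sum_eq_zero
    intro r _
    rw [Gq, if_neg (by tauto)]

theorem Fq_diag (h : V) (σ : YoungDiagram) (r : ℕ) :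
    Fq h σ r r = (if addIn σ r then (-1 : ℤ) ^ r else 0) * h σ := by
  unfold Fq
  by_cases ha : addIn σ r
  · rw [if_pos ⟨ha, remIn_grow_self ha⟩, if_pos ha, grow_shrink ha, bel_grow_self ha,
      neg_one_pow_twice]
  · rw [if_neg (by tauto), if_neg ha, zero_mul]

theorem Gq_diag (h : V) (σ : YoungDiagram) (r : ℕ) :
    Gq h σ r r = (if remIn σ r then (-1 : ℤ) ^ r else 0) * h σ := by
  unfold Gq
  by_cases hc : remIn σ r
  · rw [if_pos ⟨hc, addIn_shrink_self hc⟩, if_pos hc, shrink_grow hc, bel_shrink_self hc,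
      neg_one_pow_twice]
  · rw [if_neg (by tauto), if_neg hc, zero_mul]

theorem FG_off (h : V) (σ : YoungDiagram) {r s : ℕ} (hrs : r ≠ s) :
    Fq h σ r s + Gq h σ r s = 0 := by
  unfold Fq Gq
  by_cases hc : addIn σ r ∧ remIn (grow σ r) s
  · have hc' := (offdiag_cond hrs).mp hc
    rw [if_pos hc, if_pos hc', offdiag_shape hrs hc.1 hc.2]
    have e1 : bel (grow σ r) s = bel σ s + (if s < r then 1 else 0) := bel_grow hc.1 s
    have e2 : bel (shrink σ s) r + (if r < s then 1 else 0) = bel σ r := bel_shrink hc'.1 r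
    have hone : (if s < r then 1 else 0) + (if r < s then 1 else 0) = 1 := by
      rcases lt_or_gt_of_ne hrs with hlt | hgt
      · rw [if_neg (by omega), if_pos hlt]
      · rw [if_pos hgt, if_neg (by omega)]
    have hpar : r + bel σ r + bel (grow σ r) s = (r + bel σ s + bel (shrink σ s) r) + 1 := by
      omega
    rw [hpar, pow_succ]
    ring
  · have hc2 : ¬(remIn σ s ∧ addIn (shrink σ s) r) := fun hcc => hc ((offdiag_cond hrs).mpr hcc)
    rw [if_neg hc, if_neg hc2, add_zero]

theorem anticomm (h : V) (σ : YoungDiagram) : Dop (Uop h) σ + Uop (Dop h) σ = h σ := by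
  rw [hDU, hUD, Finset.sum_comm (s := Finset.range (σ.card + 2))
    (t := Finset.range (σ.card + 2)) (f := fun s r => Gq h σ r s)]
  rw [← Finset.sum_add_distrib]
  have hdiag : ∀ r ∈ Finset.range (σ.card + 2),
      (∑ s ∈ Finset.range (σ.card + 2), Fq h σ r s)
      + (∑ s ∈ Finset.range (σ.card + 2), Gq h σ r s)
      = ((if addIn σ r then (-1 : ℤ) ^ r else 0) + (if remIn σ r then (-1 : ℤ) ^ r else 0))
        * h σ := by
    intro r hr
    rw [← Finset.sum_add_distrib]
    rw [Finset.sum_eq_single_of_mem r hr (fun s _ hne => FG_off h σ (Ne.symm hne))]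
    rw [Fq_diag, Gq_diag, add_mul]
  rw [Finset.sum_congr rfl hdiag, ← Finset.sum_mul, Finset.sum_add_distrib,
    cornerAlt σ (by omega), one_mul]

theorem rel1 : (Dop * Uop) + (Uop * Dop) = (1 : Module.End ℤ V) := by
  apply LinearMap.ext
  intro h
  apply Finsupp.ext
  intro σ
  have := anticomm h σ
  simpa using this

theorem commDU2 : Commute (Dop : Module.End ℤ V) (Uop * Uop) := by
  have h1 : (Dop : Module.End ℤ V) * Uop = 1 - Uop * Dop := eq_sub_of_add_eq rel1
  show Dop * (Uop * Uop) = (Uop * Uop) * Dop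
  calc Dop * (Uop * Uop) = (Dop * Uop) * Uop := (mul_assoc _ _ _).symm
    _ = (1 - Uop * Dop) * Uop := by rw [h1]
    _ = Uop - Uop * (Dop * Uop) := by rw [sub_mul, one_mul, mul_assoc]
    _ = Uop - Uop * (1 - Uop * Dop) := by rw [h1]
    _ = Uop * (Uop * Dop) := by rw [mul_sub, mul_one, sub_sub_cancel]
    _ = (Uop * Uop) * Dop := (mul_assoc _ _ _).symm

theorem commPow {n : ℕ} (hev : Even n) :
    Commute ((Dop : Module.End ℤ V) ^ n) (Uop ^ n) := by
  obtain ⟨k, rfl⟩ := hev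
  have h2 : (Uop : Module.End ℤ V) ^ (k + k) = (Uop * Uop) ^ k := by
    rw [← two_mul, pow_mul, sq]
  rw [h2]
  exact (commDU2.pow_right k).pow_left (k + k)

/-! ### the signed pairing -/

def B (h g : V) : ℤ := ∑ lam ∈ h.support, (-1 : ℤ) ^ (vDom lam) * h lam * g lam

theorem B_eq_sum {h : V} (g : V) {t : Finset YoungDiagram} (ht : h.support ⊆ t) :
    B h g = ∑ lam ∈ t, (-1 : ℤ) ^ (vDom lam) * h lam * g lam :=
  Finset.sum_subset ht (fun x _ hx => by
    rw [Finsupp.notMem_support_iff.mp hx]; ring)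

theorem B_symm (h g : V) : B h g = B g h := by
  rw [B_eq_sum g (Finset.subset_union_left (s₂ := g.support)),
      B_eq_sum h (Finset.subset_union_right (s₁ := h.support))]
  apply Finset.sum_congr rfl
  intros
  ring

theorem B_zero_left (g : V) : B 0 g = 0 := by
  rw [B, Finsupp.support_zero, Finset.sum_empty]

theorem B_zero_right (h : V) : B h 0 = 0 := by
  rw [B]
  apply Finset.sum_eq_zero
  intros
  rw [Finsupp.coe_zero, Pi.zero_apply, mul_zero]

theorem B_add_left (h₁ h₂ g : V) : B (h₁ + h₂) g = B h₁ g + B h₂ g := by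
  have t1 : h₁.support ⊆ h₁.support ∪ h₂.support := Finset.subset_union_left
  have t2 : h₂.support ⊆ h₁.support ∪ h₂.support := Finset.subset_union_right
  have t3 : (h₁ + h₂).support ⊆ h₁.support ∪ h₂.support := Finsupp.support_add
  rw [B_eq_sum g t1, B_eq_sum g t2, B_eq_sum g t3, ← Finset.sum_add_distrib]
  apply Finset.sum_congr rfl
  intro lam _
  rw [Finsupp.add_apply]
  ring

theorem B_add_right (h g₁ g₂ : V) : B h (g₁ + g₂) = B h g₁ + B h g₂ := by
  rw [B, B, B, ← Finset.sum_add_distrib]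
  apply Finset.sum_congr rfl
  intro lam _
  rw [Finsupp.add_apply]
  ring

theorem B_smul_left (c : ℤ) (h g : V) : B (c • h) g = c * B h g := by
  rw [B_eq_sum g (Finsupp.support_smul (b := c) (g := h)), B, Finset.mul_sum]
  apply Finset.sum_congr rfl
  intro lam _
  rw [Finsupp.smul_apply, smul_eq_mul]
  ring

theorem B_single_left (ν : YoungDiagram) (c : ℤ) (g : V) :
    B (Finsupp.single ν c) g = (-1 : ℤ) ^ (vDom ν) * c * g ν := by
  rw [B_eq_sum g Finsupp.support_single_subset, Finset.sum_singleton, Finsupp.single_eq_same]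

theorem core_adj (ν τ : YoungDiagram) :
    (-1 : ℤ) ^ (vDom τ) * uvec ν τ = (-1 : ℤ) ^ (vDom ν) * dvec τ ν := by
  rw [uvec_apply, dvec_apply, Finset.mul_sum, Finset.mul_sum]
  have hM1 : ν.card + 1 ≤ ν.card + τ.card + 2 := by omega
  have hM2 : τ.card + 1 ≤ ν.card + τ.card + 2 := by omega
  rw [← sum_extendZ hM1 _ (fun r hr => by
    rw [if_neg, mul_zero]; rintro ⟨h1, -⟩; have := addIn_bound h1; omega)]
  rw [← sum_extendZ hM2 _ (fun r hr => by
    rw [if_neg, mul_zero]; rintro ⟨h1, -⟩; have := remIn_bound h1; omega)]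
  apply Finset.sum_congr rfl
  intro r _
  by_cases hc : addIn ν r ∧ grow ν r = τ
  · rw [if_pos hc, if_pos (growEq_iff.mp hc)]
    obtain ⟨h1, rfl⟩ := hc
    rw [vDom_grow h1, bel_grow_self h1, ← pow_add, ← pow_add]
    apply neg_one_pow_congr
    omega
  · rw [if_neg hc, if_neg (fun k => hc (growEq_iff.mpr k)), mul_zero, mul_zero]

theorem B_adj_single (ν τ : YoungDiagram) (c e : ℤ) :
    B (Uop (Finsupp.single ν c)) (Finsupp.single τ e)
    = B (Finsupp.single ν c) (Dop (Finsupp.single τ e)) := by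
  rw [Uop_single, Dop_single, B_smul_left, B_symm, B_single_left, B_single_left]
  have := core_adj ν τ
  rw [Finsupp.smul_apply, smul_eq_mul]
  linear_combination (c * e) * core_adj ν τ

theorem B_adj (h g : V) : B (Uop h) g = B h (Dop g) := by
  induction h using Finsupp.induction_linear with
  | zero => rw [map_zero, B_zero_left, B_zero_left]
  | add f₁ f₂ ih1 ih2 => rw [map_add, B_add_left, B_add_left, ih1, ih2]
  | single ν c =>
    induction g using Finsupp.induction_linear with
    | zero => rw [map_zero, B_zero_right, B_zero_right]
    | add g₁ g₂ ih1 ih2 => rw [map_add, B_add_right, B_add_right, ih1, ih2]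
    | single τ e => exact B_adj_single ν τ c e

theorem B_adj_pow (n : ℕ) (h g : V) :
    B (((Uop : Module.End ℤ V) ^ n) h) g = B h (((Dop : Module.End ℤ V) ^ n) g) := by
  induction n generalizing h g with
  | zero => rw [pow_zero, pow_zero, Module.End.one_apply, Module.End.one_apply]
  | succ k ih =>
    rw [pow_succ, pow_succ', Module.End.mul_apply, Module.End.mul_apply]
    rw [ih (Uop h) g, B_adj]

/-! ### standard Young tableaux -/

def SYTset (α lam : YoungDiagram) : Set (ℕ × ℕ → ℕ) := {f | IsSkewSYT α lam f}

theorem SYT_finite (α lam : YoungDiagram) : (SYTset α lam).Finite := by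
  classical
  set c := cellsOf α lam with hc
  set N := c.card with hN
  set Φ : (ℕ × ℕ → ℕ) → ({x // x ∈ c} → ℕ) := fun f x => f x.1 with hΦ
  have himgfin : (Φ '' SYTset α lam).Finite := by
    apply Set.Finite.subset (Set.Finite.pi (fun _ : {x // x ∈ c} => Set.finite_Iic N))
    rintro g ⟨f, hf, rfl⟩
    intro x _
    have hx := (hf.2.1).1 x.2
    rw [Set.mem_Icc] at hx
    exact hx.2
  apply Set.Finite.of_finite_image himgfin
  intro f₁ hf₁ f₂ hf₂ heq
  funext x
  by_cases hx : x ∈ c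
  · exact congr_fun heq ⟨x, hx⟩
  · rw [hf₁.1 x hx, hf₂.1 x hx]

theorem imb_eq_sum (α lam : YoungDiagram) :
    imb α lam = ∑ f ∈ (SYT_finite α lam).toFinset, tabSign α lam f := by
  rw [imb]
  exact finsum_mem_eq_finite_toFinset_sum _ (SYT_finite α lam)

theorem cellsOf_self (α : YoungDiagram) : cellsOf α α = ∅ := Finset.sdiff_self _

theorem imb_self (α : YoungDiagram) : imb α α = 1 := by
  have hset : SYTset α α = {fun _ => 0} := by
    ext f
    rw [Set.mem_singleton_iff]
    constructor
    · intro hf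
      funext x
      exact hf.1 x (by rw [cellsOf_self]; exact Finset.notMem_empty x)
    · rintro rfl
      refine ⟨fun x _ => rfl, ?_, ?_⟩
      · rw [cellsOf_self, Finset.card_empty, Finset.coe_empty, Set.Icc_eq_empty (by omega)]
        exact Set.bijOn_empty _
      · intro x hx
        rw [cellsOf_self] at hx
        exact absurd hx (Finset.notMem_empty x)
  rw [imb]
  show ∑ᶠ f ∈ SYTset α α, tabSign α α f = 1
  rw [hset, finsum_mem_singleton]
  rw [tabSign, cellsOf_self]
  simp

section Rec

variable {α lam : YoungDiagram} {r : ℕ}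

/-- the corner cell -/
abbrev xcell (lam : YoungDiagram) (r : ℕ) : ℕ × ℕ := (r, lam.rowLen r - 1)

theorem xcell_mem (hrem : remIn lam r) : xcell lam r ∈ lam := corner_mem hrem

theorem xcell_not_mem_shrink (hrem : remIn lam r) : xcell lam r ∉ shrink lam r := by
  rw [mem_shrink hrem]
  rintro ⟨-, hne⟩
  exact hne rfl

theorem le_shrink (hle : α ≤ lam) (hrem : remIn lam r) (hxr : xcell lam r ∉ α) :
    α ≤ shrink lam r := by
  intro a ha
  rw [mem_shrink hrem]
  refine ⟨hle ha, ?_⟩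
  rintro rfl
  exact hxr ha

theorem cellsOf_insert (hle : α ≤ lam) (hrem : remIn lam r) (hxr : xcell lam r ∉ α) :
    cellsOf α lam = insert (xcell lam r) (cellsOf α (shrink lam r)) := by
  ext y
  simp only [cellsOf, Finset.mem_sdiff, Finset.mem_insert, YoungDiagram.mem_cells]
  constructor
  · rintro ⟨hy, hyα⟩
    by_cases hyx : y = xcell lam r
    · exact Or.inl hyx
    · right
      exact ⟨(mem_shrink hrem).mpr ⟨hy, hyx⟩, hyα⟩
  · rintro (rfl | ⟨hy, hyα⟩)
    · exact ⟨xcell_mem hrem, hxr⟩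
    · exact ⟨shrink_le ((YoungDiagram.mem_cells _).mpr hy), hyα⟩

theorem xcell_not_mem_cellsOf_shrink (hrem : remIn lam r) :
    xcell lam r ∉ cellsOf α (shrink lam r) := by
  rw [cellsOf, Finset.mem_sdiff]
  rintro ⟨hy, -⟩
  exact xcell_not_mem_shrink hrem hy

theorem card_cellsOf_shrink (hle : α ≤ lam) (hrem : remIn lam r) (hxr : xcell lam r ∉ α) :
    (cellsOf α (shrink lam r)).card + 1 = (cellsOf α lam).card := by
  rw [cellsOf_insert hle hrem hxr,
    Finset.card_insert_of_notMem (xcell_not_mem_cellsOf_shrink hrem)]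

/-- a cell of the smaller skew shape reads after the corner iff it is in a lower row -/
theorem reads_after (hrem : remIn lam r) {y : ℕ × ℕ} (hy : y ∈ cellsOf α (shrink lam r)) :
    (((xcell lam r).1 < y.1 ∨ ((xcell lam r).1 = y.1 ∧ (xcell lam r).2 < y.2))) ↔ r < y.1 := by
  have hy' : y ∈ shrink lam r := (Finset.mem_sdiff.mp hy).1
  rw [mem_shrink hrem] at hy'
  obtain ⟨hylam, hyne⟩ := hy'
  simp only [xcell]
  constructor
  · rintro (h | ⟨h1, h2⟩)
    · exact h
    · exfalso
      have hmem := YoungDiagram.mem_iff_lt_rowLen.mp (show (y.1, y.2) ∈ lam from hylam)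
      rw [← h1] at hmem
      have h2 : y.2 = lam.rowLen r - 1 := by omega
      exact hyne (Prod.ext h1.symm h2)
  · intro h
    exact Or.inl h

theorem count_reads_after (hle : α ≤ lam) (hrem : remIn lam r) (hxr : xcell lam r ∉ α) :
    ((cellsOf α (shrink lam r)).filter (fun y => r < y.1)).card + bel α r = bel lam r := by
  have hsub : α.cells.filter (fun y : ℕ × ℕ => r < y.1)
      ⊆ (shrink lam r).cells.filter (fun y => r < y.1) :=
    Finset.filter_subset_filter _ (le_shrink hle hrem hxr)
  have hdecomp : (cellsOf α (shrink lam r)).filter (fun y => r < y.1)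
      = (shrink lam r).cells.filter (fun y => r < y.1) \ α.cells.filter (fun y => r < y.1) := by
    ext y
    simp only [cellsOf, Finset.mem_sdiff, Finset.mem_filter]
    tauto
  rw [hdecomp, Finset.card_sdiff_of_subset hsub]
  have h1 : bel (shrink lam r) r = bel lam r := bel_shrink_self hrem
  have h2 : (α.cells.filter (fun y : ℕ × ℕ => r < y.1)).card
      ≤ ((shrink lam r).cells.filter (fun y => r < y.1)).card := Finset.card_le_card hsub
  unfold bel at h1 ⊢
  omega

theorem card_filter_insert_split {x : ℕ × ℕ} {c' : Finset (ℕ × ℕ)} (hx : x ∉ c')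
    (T : ℕ × ℕ → ℕ × ℕ → ℕ) :
    ∑ p ∈ (insert x c') ×ˢ (insert x c'), T p.1 p.2
    = T x x + ∑ b ∈ c', T x b + ∑ a ∈ c', T a x + ∑ p ∈ c' ×ˢ c', T p.1 p.2 := by
  rw [Finset.sum_product, Finset.sum_insert hx, Finset.sum_insert hx,
    Finset.sum_congr rfl (fun a _ => Finset.sum_insert hx),
    Finset.sum_add_distrib, Finset.sum_product]
  ring

theorem ext_SYT (hle : α ≤ lam) (hrem : remIn lam r) (hxr : xcell lam r ∉ α)
    {f' : ℕ × ℕ → ℕ} (hf' : IsSkewSYT α (shrink lam r) f') :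
    IsSkewSYT α lam (Function.update f' (xcell lam r) (cellsOf α lam).card) := by
  classical
  set x := xcell lam r with hxdef
  set c' := cellsOf α (shrink lam r) with hc'
  have hins : cellsOf α lam = insert x c' := cellsOf_insert hle hrem hxr
  have hxc' : x ∉ c' := xcell_not_mem_cellsOf_shrink hrem
  have hcard : c'.card + 1 = (cellsOf α lam).card := card_cellsOf_shrink hle hrem hxr
  set N := (cellsOf α lam).card with hN
  set f := Function.update f' x N with hfdef
  have hfx : f x = N := Function.update_self _ _ _
  have hfval : ∀ y, y ≠ x → f y = f' y := fun y hy => Function.update_of_ne hy _ _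
  obtain ⟨hz, hbij, hinc⟩ := hf'
  have hval : ∀ y ∈ c', 1 ≤ f' y ∧ f' y + 1 ≤ N := by
    intro y hy
    have hmem := hbij.1 (Finset.mem_coe.mpr hy)
    rw [Set.mem_Icc] at hmem
    rw [← hc'] at hmem
    omega
  have hrL : 1 ≤ lam.rowLen r := by unfold remIn at hrem; omega
  refine ⟨?_, ⟨?_, ?_, ?_⟩, ?_⟩
  · -- zero off shape
    intro y hy
    have hyx : y ≠ x := by
      rintro rfl
      rw [hins] at hy
      exact hy (Finset.mem_insert_self _ _)
    rw [hfval y hyx]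
    apply hz
    intro hyc
    rw [hins] at hy
    exact hy (Finset.mem_insert_of_mem hyc)
  · -- maps to
    intro y hy
    rw [Finset.mem_coe, hins, Finset.mem_insert] at hy
    rcases hy with rfl | hy
    · rw [hfx, Set.mem_Icc]
      omega
    · rw [hfval y (ne_of_mem_of_not_mem hy hxc'), Set.mem_Icc]
      have := hval y hy
      omega
  · -- inj on
    intro y hy z hz2 heq
    rw [Finset.mem_coe, hins, Finset.mem_insert] at hy hz2
    rcases hy with rfl | hy <;> rcases hz2 with rfl | hz2
    · rfl
    · exfalso
      rw [hfx, hfval z (ne_of_mem_of_not_mem hz2 hxc')] at heq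
      have := hval z hz2
      omega
    · exfalso
      rw [hfx, hfval y (ne_of_mem_of_not_mem hy hxc')] at heq
      have := hval y hy
      omega
    · exact hbij.2.1 (Finset.mem_coe.mpr hy) (Finset.mem_coe.mpr hz2)
        (by rwa [hfval y (ne_of_mem_of_not_mem hy hxc'),
          hfval z (ne_of_mem_of_not_mem hz2 hxc')] at heq)
  · -- surj on
    intro v hv
    rw [Set.mem_Icc] at hv
    by_cases hvN : v = N
    · exact ⟨x, by rw [Finset.mem_coe, hins]; exact Finset.mem_insert_self _ _, by rw [hfx, hvN]⟩
    · have hv' : v ∈ Set.Icc 1 c'.card := Set.mem_Icc.mpr (by omega)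
      obtain ⟨y, hy, hyv⟩ := hbij.2.2 hv'
      rw [Finset.mem_coe] at hy
      refine ⟨y, by rw [Finset.mem_coe, hins]; exact Finset.mem_insert_of_mem hy, ?_⟩
      rw [hfval y (ne_of_mem_of_not_mem hy hxc')]
      exact hyv
  · -- increasing
    intro y hy z hz2 hcond
    rw [hins, Finset.mem_insert] at hy hz2
    rcases hy with rfl | hy <;> rcases hz2 with rfl | hz2
    · rcases hcond with ⟨-, h⟩ | ⟨-, h⟩ <;> omega
    · -- y = x, z in smaller shape : impossible
      exfalso
      have hzlam : z ∈ lam := shrink_le (Finset.mem_sdiff.mp hz2).1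
      have hzrow := YoungDiagram.mem_iff_lt_rowLen.mp (show (z.1, z.2) ∈ lam from hzlam)
      rcases hcond with ⟨h1, h2⟩ | ⟨h1, h2⟩
      · -- same row, z to the right of the corner
        have : z.1 = r := by rw [← h1]
        rw [this] at hzrow
        have hx2 : x.2 = lam.rowLen r - 1 := rfl
        omega
      · -- same column, z below the corner
        have hx1 : x.1 = r := rfl
        have hanti := lam.rowLen_anti (r+1) z.1 (by omega)
        have hx2 : x.2 = lam.rowLen r - 1 := rfl
        unfold remIn at hrem
        omega
    · -- y in smaller, z = x : f y < N
      rw [hfval y (ne_of_mem_of_not_mem hy hxc'), hfx]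
      have := hval y hy
      omega
    · rw [hfval y (ne_of_mem_of_not_mem hy hxc'), hfval z (ne_of_mem_of_not_mem hz2 hxc')]
      exact hinc y hy z hz2 hcond

theorem tabSign_ext (hle : α ≤ lam) (hrem : remIn lam r) (hxr : xcell lam r ∉ α)
    {f' : ℕ × ℕ → ℕ} (hf' : IsSkewSYT α (shrink lam r) f') :
    tabSign α lam (Function.update f' (xcell lam r) (cellsOf α lam).card)
    = (-1 : ℤ) ^ (bel lam r + bel α r) * tabSign α (shrink lam r) f' := by
  classical
  set x := xcell lam r with hxdef
  set c' := cellsOf α (shrink lam r) with hc'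
  have hins : cellsOf α lam = insert x c' := cellsOf_insert hle hrem hxr
  have hxc' : x ∉ c' := xcell_not_mem_cellsOf_shrink hrem
  have hcard : c'.card + 1 = (cellsOf α lam).card := card_cellsOf_shrink hle hrem hxr
  set N := (cellsOf α lam).card with hN
  set f := Function.update f' x N with hfdef
  have hfx : f x = N := Function.update_self _ _ _
  have hfval : ∀ y, y ≠ x → f y = f' y := fun y hy => Function.update_of_ne hy _ _
  have hval : ∀ y ∈ c', 1 ≤ f' y ∧ f' y + 1 ≤ N := by
    intro y hy
    have hmem := hf'.2.1.1 (Finset.mem_coe.mpr hy)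
    rw [Set.mem_Icc] at hmem
    rw [← hc'] at hmem
    omega
  have key : (((insert x c') ×ˢ (insert x c')).filter
        (fun p => (p.1.1 < p.2.1 ∨ (p.1.1 = p.2.1 ∧ p.1.2 < p.2.2)) ∧ f p.2 < f p.1)).card
      = (c'.filter (fun y => r < y.1)).card
        + ((c' ×ˢ c').filter
          (fun p => (p.1.1 < p.2.1 ∨ (p.1.1 = p.2.1 ∧ p.1.2 < p.2.2)) ∧ f' p.2 < f' p.1)).card
      := by
    rw [Finset.card_filter, Finset.card_filter, Finset.card_filter,
      card_filter_insert_split hxc'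
      (fun a b => if ((a.1 < b.1 ∨ (a.1 = b.1 ∧ a.2 < b.2)) ∧ f b < f a) then 1 else 0)]
    have h1 : (if ((x.1 < x.1 ∨ (x.1 = x.1 ∧ x.2 < x.2)) ∧ f x < f x) then 1 else 0) = 0 := by
      rw [if_neg]
      rintro ⟨-, hcl⟩
      omega
    have h2 : ∀ b ∈ c', (if ((x.1 < b.1 ∨ (x.1 = b.1 ∧ x.2 < b.2)) ∧ f b < f x) then 1 else 0)
        = (if r < b.1 then 1 else 0) := by
      intro b hb
      have hord := reads_after (α := α) hrem hb
      have hfb : f b = f' b := hfval b (ne_of_mem_of_not_mem hb hxc')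
      have hvb := hval b hb
      by_cases hcase : r < b.1
      · rw [if_pos hcase, if_pos ⟨hord.mpr hcase, by rw [hfb, hfx]; omega⟩]
      · rw [if_neg hcase, if_neg (by rintro ⟨ho, -⟩; exact hcase (hord.mp ho))]
    have h3 : ∀ a ∈ c', (if ((a.1 < x.1 ∨ (a.1 = x.1 ∧ a.2 < x.2)) ∧ f x < f a) then 1 else 0)
        = 0 := by
      intro a ha
      rw [if_neg]
      rintro ⟨-, hlt⟩
      have := hval a ha
      rw [hfx, hfval a (ne_of_mem_of_not_mem ha hxc')] at hlt
      omega
    have h4 : ∀ p ∈ c' ×ˢ c',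
        (if ((p.1.1 < p.2.1 ∨ (p.1.1 = p.2.1 ∧ p.1.2 < p.2.2)) ∧ f p.2 < f p.1) then 1 else 0)
        = (if ((p.1.1 < p.2.1 ∨ (p.1.1 = p.2.1 ∧ p.1.2 < p.2.2)) ∧ f' p.2 < f' p.1)
            then 1 else 0) := by
      intro p hp
      rw [Finset.mem_product] at hp
      rw [hfval p.1 (ne_of_mem_of_not_mem hp.1 hxc'),
        hfval p.2 (ne_of_mem_of_not_mem hp.2 hxc')]
    rw [h1, Finset.sum_congr rfl h2, Finset.sum_eq_zero h3, Finset.sum_congr rfl h4]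
    rw [← Finset.card_filter, ← Finset.card_filter]
    omega
  rw [tabSign, tabSign, hins]
  rw [key, pow_add]
  have hK := count_reads_after hle hrem hxr
  congr 1
  apply neg_one_pow_congr
  rw [← hc'] at hK
  omega

theorem cellsOf_nonempty (hle : α ≤ lam) (hne : α ≠ lam) : 1 ≤ (cellsOf α lam).card := by
  rw [Nat.one_le_iff_ne_zero, Ne, Finset.card_eq_zero]
  intro hc
  apply hne
  apply le_antisymm hle
  intro y hy
  by_contra hyα
  have : y ∈ cellsOf α lam := Finset.mem_sdiff.mpr ⟨hy, hyα⟩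
  rw [hc] at this
  exact Finset.notMem_empty y this

theorem SYT_decomp (hle : α ≤ lam) (hne : α ≠ lam) {f : ℕ × ℕ → ℕ}
    (hf : IsSkewSYT α lam f) :
    ∃ r, remIn lam r ∧ xcell lam r ∉ α ∧
      ∃ f', IsSkewSYT α (shrink lam r) f' ∧
        f = Function.update f' (xcell lam r) (cellsOf α lam).card := by
  classical
  set N := (cellsOf α lam).card with hN
  have hNpos : 1 ≤ N := cellsOf_nonempty hle hne
  obtain ⟨x, hx, hfx⟩ := hf.2.1.2.2 (Set.mem_Icc.mpr ⟨hNpos, le_refl N⟩)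
  rw [Finset.mem_coe] at hx
  obtain ⟨hxlam', hxα'⟩ := Finset.mem_sdiff.mp hx
  have hxlam : x ∈ lam := hxlam'
  have hxα : x ∉ α := fun hc => hxα' hc
  have hright : (x.1, x.2 + 1) ∉ lam := by
    intro hy
    have hyα : (x.1, x.2 + 1) ∉ α := by
      intro hc
      apply hxα
      have := α.up_left_mem (le_refl x.1) (Nat.le_succ x.2) hc
      rwa [Prod.mk.eta] at this
    have hy' : (x.1, x.2 + 1) ∈ cellsOf α lam := Finset.mem_sdiff.mpr ⟨hy, hyα⟩
    have hlt := hf.2.2 x hx (x.1, x.2 + 1) hy' (Or.inl ⟨rfl, by omega⟩)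
    have hyIcc := hf.2.1.1 (Finset.mem_coe.mpr hy')
    rw [Set.mem_Icc] at hyIcc
    omega
  have hdown : (x.1 + 1, x.2) ∉ lam := by
    intro hy
    have hyα : (x.1 + 1, x.2) ∉ α := by
      intro hc
      apply hxα
      have := α.up_left_mem (Nat.le_succ x.1) (le_refl x.2) hc
      rwa [Prod.mk.eta] at this
    have hy' : (x.1 + 1, x.2) ∈ cellsOf α lam := Finset.mem_sdiff.mpr ⟨hy, hyα⟩
    have hlt := hf.2.2 x hx (x.1 + 1, x.2) hy' (Or.inr ⟨rfl, by omega⟩)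
    have hyIcc := hf.2.1.1 (Finset.mem_coe.mpr hy')
    rw [Set.mem_Icc] at hyIcc
    omega
  have hxrow : x.2 < lam.rowLen x.1 := by
    have := YoungDiagram.mem_iff_lt_rowLen.mp (show (x.1, x.2) ∈ lam by rwa [Prod.mk.eta])
    omega
  have hx2 : x.2 + 1 = lam.rowLen x.1 := by
    have h1 : ¬ (x.2 + 1 < lam.rowLen x.1) := fun hc =>
      hright (YoungDiagram.mem_iff_lt_rowLen.mpr hc)
    omega
  have hremx : remIn lam x.1 := by
    have h1 : ¬ (x.2 < lam.rowLen (x.1 + 1)) := fun hc =>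
      hdown (YoungDiagram.mem_iff_lt_rowLen.mpr hc)
    unfold remIn
    omega
  have hxeq : xcell lam x.1 = x := Prod.ext rfl (by simp only [xcell]; omega)
  set c' := cellsOf α (shrink lam x.1) with hc'
  have hins : cellsOf α lam = insert x c' := by
    have := cellsOf_insert hle hremx (hxeq ▸ hxα)
    rwa [hxeq] at this
  have hxc' : x ∉ c' := hxeq ▸ xcell_not_mem_cellsOf_shrink (α := α) hremx
  have hcard : c'.card + 1 = N := card_cellsOf_shrink hle hremx (hxeq ▸ hxα)
  have hfIcc : ∀ y ∈ cellsOf α lam, 1 ≤ f y ∧ f y ≤ N := by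
    intro y hy
    have := hf.2.1.1 (Finset.mem_coe.mpr hy)
    rwa [Set.mem_Icc] at this
  refine ⟨x.1, hremx, hxeq ▸ hxα, Function.update f x 0, ⟨?_, ⟨?_, ?_, ?_⟩, ?_⟩, ?_⟩
  · -- zero off smaller shape
    intro y hy
    rw [← hc'] at hy
    by_cases hyx : y = x
    · subst hyx
      exact Function.update_self _ _ _
    · rw [Function.update_of_ne hyx]
      apply hf.1
      rw [hins, Finset.mem_insert]
      tauto
  · -- maps to
    intro y hy
    rw [Finset.mem_coe, ← hc'] at hy
    have hyx : y ≠ x := fun hc => hxc' (hc ▸ hy)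
    rw [Function.update_of_ne hyx, Set.mem_Icc]
    have hyc : y ∈ cellsOf α lam := by rw [hins]; exact Finset.mem_insert_of_mem hy
    have h1 := hfIcc y hyc
    have h2 : f y ≠ N := by
      intro hc
      apply hyx
      exact hf.2.1.2.1 (Finset.mem_coe.mpr hyc) (Finset.mem_coe.mpr hx) (by rw [hc, hfx])
    rw [← hc']
    omega
  · -- inj on
    intro y hy z hz heq
    rw [Finset.mem_coe, ← hc'] at hy hz
    have hyx : y ≠ x := fun hc => hxc' (hc ▸ hy)
    have hzx : z ≠ x := fun hc => hxc' (hc ▸ hz)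
    rw [Function.update_of_ne hyx, Function.update_of_ne hzx] at heq
    have hyc : y ∈ cellsOf α lam := by rw [hins]; exact Finset.mem_insert_of_mem hy
    have hzc : z ∈ cellsOf α lam := by rw [hins]; exact Finset.mem_insert_of_mem hz
    exact hf.2.1.2.1 (Finset.mem_coe.mpr hyc) (Finset.mem_coe.mpr hzc) heq
  · -- surj on
    intro v hv
    rw [Set.mem_Icc, ← hc'] at hv
    have hv' : v ∈ Set.Icc 1 N := Set.mem_Icc.mpr (by omega)
    obtain ⟨y, hy, hyv⟩ := hf.2.1.2.2 hv'
    rw [Finset.mem_coe, hins, Finset.mem_insert] at hy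
    rcases hy with rfl | hy
    · exfalso
      rw [hfx] at hyv
      omega
    · have hyx : y ≠ x := fun hc => hxc' (hc ▸ hy)
      exact ⟨y, Finset.mem_coe.mpr hy,
        by rw [Function.update_of_ne hyx]; exact hyv⟩
  · -- increasing
    intro y hy z hz hcond
    rw [← hc'] at hy hz
    have hyx : y ≠ x := fun hc => hxc' (hc ▸ hy)
    have hzx : z ≠ x := fun hc => hxc' (hc ▸ hz)
    rw [Function.update_of_ne hyx, Function.update_of_ne hzx]
    have hyc : y ∈ cellsOf α lam := by rw [hins]; exact Finset.mem_insert_of_mem hy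
    have hzc : z ∈ cellsOf α lam := by rw [hins]; exact Finset.mem_insert_of_mem hz
    exact hf.2.2 y hyc z hzc hcond
  · -- f decomposes
    funext y
    by_cases hyx : y = x
    · subst hyx
      rw [hxeq, Function.update_self, hfx]
    · rw [hxeq, Function.update_of_ne hyx, Function.update_of_ne hyx]

theorem ext_inj (hrem : remIn lam r) :
    Set.InjOn (fun f' => Function.update f' (xcell lam r) (cellsOf α lam).card)
      (SYTset α (shrink lam r)) := by
  intro f₁ h₁ f₂ h₂ heq
  funext y
  by_cases hy : y = xcell lam r
  · subst hy
    rw [h₁.1 _ (xcell_not_mem_cellsOf_shrink hrem), h₂.1 _ (xcell_not_mem_cellsOf_shrink hrem)]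
  · have := congr_fun heq y
    beta_reduce at this
    rwa [Function.update_of_ne hy, Function.update_of_ne hy] at this

theorem finsum_mem_mul_left {γ : Type*} {s : Set γ} (hs : s.Finite) (c : ℤ) (g : γ → ℤ) :
    ∑ᶠ f ∈ s, c * g f = c * ∑ᶠ f ∈ s, g f := by
  rw [finsum_mem_eq_finite_toFinset_sum _ hs, finsum_mem_eq_finite_toFinset_sum _ hs,
    Finset.mul_sum]

theorem imb_rec (hle : α ≤ lam) (hne : α ≠ lam) :
    imb α lam = ∑ r ∈ Finset.range (lam.card + 1),
      if remIn lam r ∧ xcell lam r ∉ α then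
        (-1 : ℤ) ^ (bel lam r + bel α r) * imb α (shrink lam r) else 0 := by
  classical
  set R : Finset ℕ := (Finset.range (lam.card + 1)).filter
    (fun r => remIn lam r ∧ xcell lam r ∉ α) with hR
  have hmemR : ∀ r, r ∈ R ↔ (r < lam.card + 1 ∧ remIn lam r ∧ xcell lam r ∉ α) := by
    intro r
    rw [hR, Finset.mem_filter, Finset.mem_range]
  have hset : SYTset α lam = ⋃ r ∈ (R : Set ℕ),
      (fun f' => Function.update f' (xcell lam r) (cellsOf α lam).card) ''
        SYTset α (shrink lam r) := by
    ext f
    simp only [Set.mem_iUnion, Finset.mem_coe]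
    constructor
    · intro hf
      obtain ⟨r, hrem, hxr, f', hf', rfl⟩ := SYT_decomp hle hne hf
      refine ⟨r, (hmemR r).mpr ⟨by have := remIn_bound hrem; omega, hrem, hxr⟩, f', hf', rfl⟩
    · rintro ⟨r, hr, f', hf', rfl⟩
      obtain ⟨-, hrem, hxr⟩ := (hmemR r).mp hr
      exact ext_SYT hle hrem hxr hf'
  have himb : imb α lam = ∑ᶠ f ∈ SYTset α lam, tabSign α lam f := rfl
  have hdisj : (R : Set ℕ).PairwiseDisjoint (fun r =>
      (fun f' => Function.update f' (xcell lam r) (cellsOf α lam).card) ''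
        SYTset α (shrink lam r)) := by
    intro r₁ h₁ r₂ h₂ hne12
    rw [Finset.mem_coe] at h₁ h₂
    obtain ⟨-, hrem₁, hxα₁⟩ := (hmemR r₁).mp h₁
    obtain ⟨-, hrem₂, hxα₂⟩ := (hmemR r₂).mp h₂
    rw [Function.onFun, Set.disjoint_left]
    rintro g ⟨f₁', hf₁, hg1⟩ ⟨f₂', hf₂, hg2⟩
    beta_reduce at hg1 hg2
    have hSYT : IsSkewSYT α lam g := hg1 ▸ ext_SYT hle hrem₁ hxα₁ hf₁
    have hv1 : g (xcell lam r₁) = (cellsOf α lam).card := by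
      rw [← hg1]
      exact Function.update_self _ _ _
    have hv2 : g (xcell lam r₂) = (cellsOf α lam).card := by
      rw [← hg2]
      exact Function.update_self _ _ _
    have hm1 : xcell lam r₁ ∈ cellsOf α lam := Finset.mem_sdiff.mpr ⟨corner_mem hrem₁, hxα₁⟩
    have hm2 : xcell lam r₂ ∈ cellsOf α lam := Finset.mem_sdiff.mpr ⟨corner_mem hrem₂, hxα₂⟩
    have := hSYT.2.1.2.1 (Finset.mem_coe.mpr hm1) (Finset.mem_coe.mpr hm2) (by rw [hv1, hv2])
    apply hne12
    have := congr_arg Prod.fst this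
    simpa using this
  rw [himb, hset, finsum_mem_biUnion hdisj R.finite_toSet
    (fun r _ => (SYT_finite α (shrink lam r)).image _), finsum_mem_coe_finset]
  have step : ∀ r ∈ R, (∑ᶠ f ∈ (fun f' => Function.update f' (xcell lam r)
        (cellsOf α lam).card) '' SYTset α (shrink lam r), tabSign α lam f)
      = (-1 : ℤ) ^ (bel lam r + bel α r) * imb α (shrink lam r) := by
    intro r hr
    obtain ⟨-, hrem, hxr⟩ := (hmemR r).mp hr
    rw [finsum_mem_image (ext_inj hrem)]
    calc (∑ᶠ j ∈ SYTset α (shrink lam r),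
            tabSign α lam (Function.update j (xcell lam r) (cellsOf α lam).card))
        = ∑ᶠ j ∈ SYTset α (shrink lam r),
            (-1 : ℤ) ^ (bel lam r + bel α r) * tabSign α (shrink lam r) j :=
          finsum_mem_congr rfl (fun f' hf' => tabSign_ext hle hrem hxr hf')
      _ = (-1 : ℤ) ^ (bel lam r + bel α r) * imb α (shrink lam r) := by
          rw [finsum_mem_mul_left (SYT_finite α (shrink lam r))]
          rfl
  rw [Finset.sum_congr rfl step, hR, Finset.sum_filter]

end Rec

def eps (α lam : YoungDiagram) : ℤ := (-1 : ℤ) ^ ((cellsOf α lam).sum (fun y => bel α y.1))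

theorem eps_sq (α lam : YoungDiagram) : eps α lam * eps α lam = 1 := by
  rw [eps, ← pow_add]
  have h : ((cellsOf α lam).sum (fun y => bel α y.1)
      + (cellsOf α lam).sum (fun y => bel α y.1)) % 2 = 0 % 2 := by omega
  rw [neg_one_pow_congr h, pow_zero]

theorem up_supp (n : ℕ) (α : YoungDiagram) : ∀ σ : YoungDiagram,
    (((Uop : Module.End ℤ V) ^ n) (Finsupp.single α 1)) σ ≠ 0 →
    α ≤ σ ∧ σ.card = α.card + n := by
  induction n with
  | zero =>
    intro σ hne
    rw [pow_zero, Module.End.one_apply] at hne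
    have heq : α = σ := by
      by_contra hc
      rw [Finsupp.single_apply, if_neg hc] at hne
      exact hne rfl
    subst heq
    exact ⟨le_refl α, by omega⟩
  | succ k ih =>
    intro σ hne
    rw [pow_succ', Module.End.mul_apply, U_apply] at hne
    obtain ⟨r, -, hr⟩ := Finset.exists_ne_zero_of_sum_ne_zero hne
    have hrem : remIn σ r := by
      by_contra hc
      rw [if_neg hc] at hr
      exact hr rfl
    rw [if_pos hrem] at hr
    have hcoef : (((Uop : Module.End ℤ V) ^ k) (Finsupp.single α 1)) (shrink σ r) ≠ 0 := by
      intro hc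
      rw [hc, mul_zero] at hr
      exact hr rfl
    obtain ⟨h1, h2⟩ := ih _ hcoef
    refine ⟨le_trans h1 shrink_le, ?_⟩
    have := card_shrink hrem
    omega

theorem down_supp (n : ℕ) (α : YoungDiagram) : ∀ σ : YoungDiagram,
    (((Dop : Module.End ℤ V) ^ n) (Finsupp.single α 1)) σ ≠ 0 →
    σ ≤ α ∧ σ.card + n = α.card := by
  induction n with
  | zero =>
    intro σ hne
    rw [pow_zero, Module.End.one_apply] at hne
    have heq : α = σ := by
      by_contra hc
      rw [Finsupp.single_apply, if_neg hc] at hne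
      exact hne rfl
    subst heq
    exact ⟨le_refl α, by omega⟩
  | succ k ih =>
    intro σ hne
    rw [pow_succ', Module.End.mul_apply, D_apply] at hne
    obtain ⟨r, -, hr⟩ := Finset.exists_ne_zero_of_sum_ne_zero hne
    have hadd : addIn σ r := by
      by_contra hc
      rw [if_neg hc] at hr
      exact hr rfl
    rw [if_pos hadd] at hr
    have hcoef : (((Dop : Module.End ℤ V) ^ k) (Finsupp.single α 1)) (grow σ r) ≠ 0 := by
      intro hc
      rw [hc, mul_zero] at hr
      exact hr rfl
    obtain ⟨h1, h2⟩ := ih _ hcoef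
    refine ⟨le_trans le_grow h1, ?_⟩
    have := card_grow hadd
    omega

theorem lemA (n : ℕ) (α : YoungDiagram) : ∀ lam : YoungDiagram, α ≤ lam →
    (cellsOf α lam).card = n →
    imb α lam = eps α lam * (((Uop : Module.End ℤ V) ^ n) (Finsupp.single α 1)) lam := by
  induction n with
  | zero =>
    intro lam hle hcard
    have heq : lam = α := by
      apply le_antisymm ?_ hle
      intro y hy
      by_contra hyα
      have hmem : y ∈ cellsOf α lam := Finset.mem_sdiff.mpr ⟨hy, hyα⟩
      rw [Finset.card_eq_zero.mp hcard] at hmem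
      exact Finset.notMem_empty y hmem
    subst heq
    rw [imb_self, pow_zero, Module.End.one_apply, Finsupp.single_eq_same, eps, cellsOf_self,
      Finset.sum_empty, pow_zero, one_mul]
  | succ k ih =>
    intro lam hle hcard
    have hne : α ≠ lam := by
      intro h
      rw [← h, cellsOf_self, Finset.card_empty] at hcard
      omega
    rw [imb_rec hle hne, pow_succ', Module.End.mul_apply, U_apply, Finset.mul_sum]
    apply Finset.sum_congr rfl
    intro r _
    by_cases hc : remIn lam r ∧ xcell lam r ∉ α
    · obtain ⟨hrem, hxr⟩ := hc
      rw [if_pos ⟨hrem, hxr⟩, if_pos hrem]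
      have hle' : α ≤ shrink lam r := le_shrink hle hrem hxr
      have hcard' : (cellsOf α (shrink lam r)).card = k := by
        have := card_cellsOf_shrink hle hrem hxr
        omega
      rw [ih (shrink lam r) hle' hcard']
      have hepsrel : eps α lam = (-1 : ℤ) ^ (bel α r) * eps α (shrink lam r) := by
        rw [eps, eps, cellsOf_insert hle hrem hxr,
          Finset.sum_insert (xcell_not_mem_cellsOf_shrink hrem), pow_add]
      rw [hepsrel, pow_add]
      ring
    · rw [if_neg hc]
      by_cases hrem : remIn lam r
      · rw [if_pos hrem]
        have hxmem : xcell lam r ∈ α := by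
          by_contra hxr
          exact hc ⟨hrem, hxr⟩
        have hzero : (((Uop : Module.End ℤ V) ^ k) (Finsupp.single α 1)) (shrink lam r)
            = 0 := by
          by_contra hnz
          obtain ⟨h1, -⟩ := up_supp k α _ hnz
          have hmm : xcell lam r ∈ shrink lam r := by
            have := h1 ((YoungDiagram.mem_cells _).mpr hxmem)
            exact (YoungDiagram.mem_cells _).mp this
          exact xcell_not_mem_shrink hrem hmm
        rw [hzero, mul_zero, mul_zero]
      · rw [if_neg hrem, mul_zero]


theorem neg_one_mul_self_pow (k : ℕ) : ((-1 : ℤ)) ^ k * (-1) ^ k = 1 := by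
  rw [← pow_add]
  have h : (k + k) % 2 = 0 % 2 := by omega
  rw [neg_one_pow_congr h, pow_zero]

theorem LHS_eq (α : YoungDiagram) (n : ℕ) :
    (∑ᶠ lam ∈ {lam : YoungDiagram | α ≤ lam ∧ lam.card = α.card + n},
      (-1 : ℤ) ^ vDom lam * (imb α lam) ^ 2)
    = B (((Uop : Module.End ℤ V) ^ n) (Finsupp.single α 1))
        (((Uop : Module.End ℤ V) ^ n) (Finsupp.single α 1)) := by
  classical
  set h := ((Uop : Module.End ℤ V) ^ n) (Finsupp.single α 1) with hh
  have hkey : ∀ lam, α ≤ lam → lam.card = α.card + n → imb α lam = eps α lam * h lam := by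
    intro lam h1 h2
    apply lemA n α lam h1
    have hsub : α.cells ⊆ lam.cells := h1
    have h2' : lam.cells.card = α.cells.card + n := h2
    rw [cellsOf, Finset.card_sdiff_of_subset hsub]
    omega
  have hsupp : {lam : YoungDiagram | α ≤ lam ∧ lam.card = α.card + n}
        ∩ Function.support (fun lam => (-1 : ℤ) ^ vDom lam * (imb α lam) ^ 2)
      = ↑h.support ∩ Function.support (fun lam => (-1 : ℤ) ^ vDom lam * (imb α lam) ^ 2) := by
    ext lam
    simp only [Set.mem_inter_iff, Set.mem_setOf_eq, Function.mem_support, Finset.mem_coe,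
      Finsupp.mem_support_iff]
    constructor
    · rintro ⟨⟨h1, h2⟩, hFne⟩
      refine ⟨?_, hFne⟩
      intro hc
      apply hFne
      rw [hkey lam h1 h2, hc, mul_zero]
      ring
    · rintro ⟨h1, hFne⟩
      exact ⟨up_supp n α lam h1, hFne⟩
  rw [finsum_mem_eq_sum_of_inter_support_eq _ hsupp, B]
  apply Finset.sum_congr rfl
  intro lam hl
  rw [Finsupp.mem_support_iff] at hl
  obtain ⟨h1, h2⟩ := up_supp n α lam hl
  rw [hkey lam h1 h2]
  linear_combination ((-1 : ℤ) ^ (vDom lam) * (h lam) ^ 2) * eps_sq α lam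

theorem RHS_eq (α : YoungDiagram) (n : ℕ) :
    (∑ᶠ μ ∈ {μ : YoungDiagram | μ ≤ α ∧ μ.card + n = α.card},
      (-1 : ℤ) ^ vDom μ * (imb μ α) ^ 2)
    = B (((Dop : Module.End ℤ V) ^ n) (Finsupp.single α 1))
        (((Dop : Module.End ℤ V) ^ n) (Finsupp.single α 1)) := by
  classical
  set g := ((Dop : Module.End ℤ V) ^ n) (Finsupp.single α 1) with hg
  have hkey : ∀ μ, μ ≤ α → μ.card + n = α.card →
      (imb μ α) ^ 2 = (g μ) ^ 2 := by
    intro μ h1 h2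
    have hA : imb μ α = eps μ α * (((Uop : Module.End ℤ V) ^ n) (Finsupp.single μ 1)) α := by
      apply lemA n μ α h1
      have hsub : μ.cells ⊆ α.cells := h1
      have h2' : μ.cells.card + n = α.cells.card := h2
      rw [cellsOf, Finset.card_sdiff_of_subset hsub]
      omega
    have key2 : (-1 : ℤ) ^ (vDom α) * (((Uop : Module.End ℤ V) ^ n) (Finsupp.single μ 1)) α
        = (-1 : ℤ) ^ (vDom μ) * g μ := by
      have hadj := B_adj_pow n (Finsupp.single μ 1) (Finsupp.single α 1)
      rw [B_symm, B_single_left, B_single_left] at hadj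
      rw [hg]
      linarith [hadj]
    set x := (((Uop : Module.End ℤ V) ^ n) (Finsupp.single μ 1)) α with hx
    have hsq : x ^ 2 = (g μ) ^ 2 := by
      calc x ^ 2 = ((-1 : ℤ) ^ (vDom α) * (-1) ^ (vDom α)) * x ^ 2 := by
            rw [neg_one_mul_self_pow, one_mul]
        _ = ((-1 : ℤ) ^ (vDom α) * x) * ((-1) ^ (vDom α) * x) := by ring
        _ = ((-1 : ℤ) ^ (vDom μ) * g μ) * ((-1) ^ (vDom μ) * g μ) := by rw [key2]
        _ = ((-1 : ℤ) ^ (vDom μ) * (-1) ^ (vDom μ)) * (g μ) ^ 2 := by ring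
        _ = (g μ) ^ 2 := by rw [neg_one_mul_self_pow, one_mul]
    rw [hA]
    calc (eps μ α * x) ^ 2 = (eps μ α * eps μ α) * x ^ 2 := by ring
      _ = x ^ 2 := by rw [eps_sq, one_mul]
      _ = (g μ) ^ 2 := hsq
  have hsupp : {μ : YoungDiagram | μ ≤ α ∧ μ.card + n = α.card}
        ∩ Function.support (fun μ => (-1 : ℤ) ^ vDom μ * (imb μ α) ^ 2)
      = ↑g.support ∩ Function.support (fun μ => (-1 : ℤ) ^ vDom μ * (imb μ α) ^ 2) := by
    ext μ
    simp only [Set.mem_inter_iff, Set.mem_setOf_eq, Function.mem_support, Finset.mem_coe,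
      Finsupp.mem_support_iff]
    constructor
    · rintro ⟨⟨h1, h2⟩, hFne⟩
      refine ⟨?_, hFne⟩
      intro hc
      apply hFne
      have := hkey μ h1 h2
      rw [hc] at this
      rw [this]
      ring
    · rintro ⟨h1, hFne⟩
      exact ⟨down_supp n α μ h1, hFne⟩
  rw [finsum_mem_eq_sum_of_inter_support_eq _ hsupp, B]
  apply Finset.sum_congr rfl
  intro μ hl
  rw [Finsupp.mem_support_iff] at hl
  obtain ⟨h1, h2⟩ := down_supp n α μ hl
  rw [hkey μ h1 h2]
  ring

end

end SjoAux

theorem stmt9' (α : YoungDiagram) (n : ℕ) (hn : 0 < n) (hev : Even n) :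
    (∑ᶠ lam ∈ {lam : YoungDiagram | α ≤ lam ∧ lam.card = α.card + n},
      (-1 : ℤ) ^ vDom lam * (imb α lam) ^ 2) =
    ∑ᶠ μ ∈ {μ : YoungDiagram | μ ≤ α ∧ μ.card + n = α.card},
      (-1 : ℤ) ^ vDom μ * (imb μ α) ^ 2 := by
  classical
  rw [SjoAux.LHS_eq α n, SjoAux.RHS_eq α n]
  set U := (SjoAux.Uop : Module.End ℤ SjoAux.V) with hU
  set D := (SjoAux.Dop : Module.End ℤ SjoAux.V) with hD
  set δ := (Finsupp.single α (1 : ℤ)) with hδ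
  have c1 : SjoAux.B ((U ^ n) δ) ((U ^ n) δ) = SjoAux.B δ ((D ^ n) ((U ^ n) δ)) :=
    SjoAux.B_adj_pow n δ ((U ^ n) δ)
  have c2 : (D ^ n) ((U ^ n) δ) = (U ^ n) ((D ^ n) δ) := by
    rw [← Module.End.mul_apply, ← Module.End.mul_apply, (SjoAux.commPow hev).eq]
  have c3 : SjoAux.B δ ((U ^ n) ((D ^ n) δ)) = SjoAux.B ((U ^ n) ((D ^ n) δ)) δ :=
    SjoAux.B_symm _ _
  have c4 : SjoAux.B ((U ^ n) ((D ^ n) δ)) δ = SjoAux.B ((D ^ n) δ) ((D ^ n) δ) :=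
    SjoAux.B_adj_pow n ((D ^ n) δ) δ
  rw [c1, c2, c3, c4]

/-- For even positive `n`:
`Σ_{λ/α ⊢ n} (-1)^{v(λ)} I_{λ/α}² = Σ_{α/μ ⊢ n} (-1)^{v(μ)} I_{α/μ}²`. -/
theorem stmt9 (α : YoungDiagram) (n : ℕ) (hn : 0 < n) (hev : Even n) :
    (∑ᶠ lam ∈ {lam : YoungDiagram | α ≤ lam ∧ lam.card = α.card + n},
      (-1 : ℤ) ^ vDom lam * (imb α lam) ^ 2) =
    ∑ᶠ μ ∈ {μ : YoungDiagram | μ ≤ α ∧ μ.card + n = α.card},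
      (-1 : ℤ) ^ vDom μ * (imb μ α) ^ 2 := stmt9' α n hn hev
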